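/- arXiv:0905.0135 — 4 statements merged into one kernel-verified Lean document; each statement's English description precedes it below -/
import Mathlib

section
/- Let F be a field with characteristic different from 2, let G = (V, E) be a finite simple graph, let A : V → F be injective, and let k ≥ 3 be an odd integer. Then the number of injective graph homomorphisms from the cycle graph on k vertices into G is at most |A⊕A|^k. (The number of such injective homomorphisms equals 2k times the number of k-cycles in G.) -/
/-- Let `F` be a field of characteristic `≠ 2`, `G` a finite simple
graph, `A : V → F` injective, and `k ≥ 3` odd.  Then the number of injective graph
homomorphisms from the cycle graph on `k` vertices into `G` is at most `|A⊕A|^k`. -/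
theorem injective_cycle_homs_le_sumset_pow {F : Type*} [Field F] (hF : ringChar F ≠ 2)
    {V : Type*} [Fintype V] (G : SimpleGraph V) (A : V → F)
    (hA : Function.Injective A) (k : ℕ) (hk : 3 ≤ k) (hodd : Odd k) :
    {f : SimpleGraph.cycleGraph k →g G | Function.Injective f}.ncard ≤
      {x : F | ∃ u v : V, G.Adj u v ∧ x = A u + A v}.ncard ^ k := by
  classical
  obtain ⟨m, rfl⟩ : ∃ m, k = m + 3 := ⟨k - 3, by omega⟩
  set S : Set F := {x : F | ∃ u v : V, G.Adj u v ∧ x = A u + A v} with hS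
  have hSfin : S.Finite := by
    apply Set.Finite.subset (Set.finite_range (fun p : V × V => A p.1 + A p.2))
    rintro x ⟨u, v, _, rfl⟩; exact ⟨(u, v), rfl⟩
  haveI : Finite S := hSfin
  have two_ne : (2 : F) ≠ 0 := Ring.two_ne_zero hF
  have hadj : ∀ i : Fin (m + 3), (SimpleGraph.cycleGraph (m + 3)).Adj i (i + 1) := by
    intro i
    have : (m + 3) = (m + 1) + 2 := by omega
    rw [this] at *
    rw [SimpleGraph.cycleGraph_adj]
    right; simp
  set Ψ : {f : SimpleGraph.cycleGraph (m + 3) →g G | Function.Injective f} →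
      (Fin (m + 3) → S) := fun f i =>
    ⟨A (f.1 i) + A (f.1 (i + 1)),
      f.1 i, f.1 (i + 1), f.1.map_adj (hadj i), rfl⟩ with hΨdef
  have hΨ : Function.Injective Ψ := by
    intro f g hfg
    have hsum : ∀ i : Fin (m + 3),
        A (f.1 i) + A (f.1 (i + 1)) = A (g.1 i) + A (g.1 (i + 1)) := by
      intro i
      have := congrFun hfg i
      exact congrArg Subtype.val this
    set c : Fin (m + 3) → F := fun i => A (f.1 i) - A (g.1 i) with hc
    have hstep : ∀ i : Fin (m + 3), c (i + 1) = - c i := by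
      intro i
      have := hsum i
      simp only [hc]
      linear_combination hsum i
    open Fin.NatCast in
    have hpow : ∀ n : ℕ, c ((n : Fin (m + 3))) = (-1) ^ n * c 0 := by
      intro n
      induction n with
      | zero => simp
      | succ n ih =>
        have : ((n + 1 : ℕ) : Fin (m + 3)) = (n : Fin (m + 3)) + 1 := by
          push_cast; ring
        rw [this, hstep, ih]; ring
    have hc0 : c 0 = 0 := by
      have h1 := hpow (m + 3)
      rw [Fin.natCast_self] at h1
      have h2 : (-1 : F) ^ (m + 3) = -1 := hodd.neg_one_pow
      rw [h2] at h1
      have h3 : (2 : F) * c 0 = 0 := by linear_combination h1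
      exact (mul_eq_zero.mp h3).resolve_left two_ne
    open Fin.NatCast in
    have hzero : ∀ n : ℕ, f.1 ((n : Fin (m + 3))) = g.1 ((n : Fin (m + 3))) := by
      intro n
      induction n with
      | zero =>
        have h0 : A (f.1 0) = A (g.1 0) := by
          have := hc0; simp only [hc] at this
          have := sub_eq_zero.mp this
          simpa using this
        simpa using hA h0
      | succ n ih =>
        have hcast : ((n + 1 : ℕ) : Fin (m + 3)) = (n : Fin (m + 3)) + 1 := by
          push_cast; ring
        have h := hsum (n : Fin (m + 3))
        rw [ih] at h
        have : A (f.1 ((n : Fin (m + 3)) + 1)) = A (g.1 ((n : Fin (m + 3)) + 1)) :=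
          add_left_cancel h
        rw [hcast]
        exact hA this
    have : f.1 = g.1 := by
      ext i
      have := hzero i.val
      simpa using this
    exact Subtype.ext this
  haveI : Finite (Fin (m + 3) → S) := Pi.finite
  calc {f : SimpleGraph.cycleGraph (m + 3) →g G | Function.Injective f}.ncard
      = Nat.card {f : SimpleGraph.cycleGraph (m + 3) →g G | Function.Injective f} :=
        (Nat.card_coe_set_eq _).symm
    _ ≤ Nat.card (Fin (m + 3) → S) := Nat.card_le_card_of_injective Ψ hΨ
    _ = Nat.card S ^ Nat.card (Fin (m + 3)) := Nat.card_fun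
    _ = S.ncard ^ (m + 3) := by rw [Nat.card_coe_set_eq, Nat.card_eq_fintype_card,
        Fintype.card_fin]
end

section
/- Let G = (V, E) be a connected finite simple graph on n ≥ 2 vertices with diameter r (the maximal graph distance between two vertices), and let A : V → ℤ be injective with s = |A⊕A|. Then 2^s · binomial(r + s, s) ≥ n/2. -/
lemma multiset_card_finset_sum {β α : Type*} (s : Finset β) (f : β → Multiset α) :
    Multiset.card (∑ x ∈ s, f x) = ∑ x ∈ s, Multiset.card (f x) := by
  classical
  induction s using Finset.cons_induction with
  | empty => simp
  | cons a s ha ih => simp [Finset.sum_cons, ih]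

/-- Let `G` be a connected graph on `n ≥ 2` vertices with diameter `r`
and let `A : V → ℤ` be injective with `s = |A⊕A|`.  Then `2^s · C(r+s, s) ≥ n/2`. -/
theorem sumset_diameter_bound {V : Type*} [Fintype V] (G : SimpleGraph V)
    (hconn : G.Connected) (hn : 2 ≤ Fintype.card V) (A : V → ℤ)
    (hA : Function.Injective A) (s r : ℕ)
    (hs : s = {x : ℤ | ∃ u v : V, G.Adj u v ∧ x = A u + A v}.ncard)
    (hr : r = G.diam) :
    (Fintype.card V : ℝ) / 2 ≤ 2 ^ s * (r + s).choose s := by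
  classical
  -- the sumset as a Finset
  have hfin : {x : ℤ | ∃ u v : V, G.Adj u v ∧ x = A u + A v}.Finite := by
    apply (Set.finite_range fun p : V × V => A p.1 + A p.2).subset
    rintro x ⟨u, v, _, rfl⟩
    exact ⟨(u, v), rfl⟩
  set SF : Finset ℤ := hfin.toFinset with hSFdef
  have hcardSF : SF.card = s := by
    rw [hs, ← Set.ncard_coe_finset, hSFdef, Set.Finite.coe_toFinset]
  -- key walk lemma
  have key : ∀ (u v : V) (w : G.Walk u v), ∃ (ε : Bool) (c : ℤ → ℤ),
      (∑ x ∈ SF, (c x).natAbs) ≤ w.length ∧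
      A v = (cond ε 1 (-1)) * A u + ∑ x ∈ SF, c x * x := by
    intro u v w
    induction w with
    | nil => exact ⟨true, 0, by simp, by simp⟩
    | @cons u a v h p ih =>
      obtain ⟨ε, c, h1, h2⟩ := ih
      set y : ℤ := A u + A a with hy
      have hymem : y ∈ SF := hfin.mem_toFinset.mpr ⟨u, a, h, rfl⟩
      set sgn : ℤ := cond ε 1 (-1) with hsgn
      refine ⟨!ε, fun x => c x + (if x = y then sgn else 0), ?_, ?_⟩
      · calc (∑ x ∈ SF, (c x + if x = y then sgn else 0).natAbs)
            ≤ ∑ x ∈ SF, ((c x).natAbs + (if x = y then sgn else 0).natAbs) :=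
              Finset.sum_le_sum fun x _ => Int.natAbs_add_le _ _
          _ = (∑ x ∈ SF, (c x).natAbs) + ∑ x ∈ SF, (if x = y then sgn else 0).natAbs :=
              Finset.sum_add_distrib
          _ ≤ p.length + 1 := by
              have : (∑ x ∈ SF, (if x = y then sgn else 0).natAbs) = 1 := by
                have : ∀ x, (if x = y then sgn else 0).natAbs
                    = if x = y then sgn.natAbs else 0 := by
                  intro x; split <;> simp
                rw [Finset.sum_congr rfl fun x _ => this x, Finset.sum_ite_eq' SF y]
                simp only [hymem, if_true]
                cases ε <;> simp [hsgn]
              omega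
          _ = (SimpleGraph.Walk.cons h p).length := by
              simp [SimpleGraph.Walk.length_cons]
      · have hsum : (∑ x ∈ SF, (c x + if x = y then sgn else 0) * x)
            = (∑ x ∈ SF, c x * x) + sgn * y := by
          rw [Finset.sum_congr rfl (fun x _ => add_mul _ _ _), Finset.sum_add_distrib]
          congr 1
          have : ∀ x, (if x = y then sgn else 0) * x = if x = y then sgn * x else 0 := by
            intro x; split <;> simp
          rw [Finset.sum_congr rfl fun x hx => this x, Finset.sum_ite_eq' SF y]
          simp [hymem]
        rw [hsum, h2]
        have : A a = y - A u := by rw [hy]; ring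
        rw [this]
        cases ε <;> simp [hsgn] <;> ring
  -- root vertex
  haveI hne : Nonempty V := Fintype.card_pos_iff.mp (by omega)
  obtain ⟨u₀⟩ := id hne
  have hediam : G.ediam ≠ ⊤ := by
    obtain ⟨u, v, huv⟩ := SimpleGraph.exists_edist_eq_ediam_of_finite (G := G)
    rw [← huv]
    exact SimpleGraph.edist_ne_top_iff_reachable.mpr (hconn u v)
  have rep : ∀ v : V, ∃ (ε : Bool) (c : ℤ → ℤ),
      (∑ x ∈ SF, (c x).natAbs) ≤ r ∧
      A v = (cond ε 1 (-1)) * A u₀ + ∑ x ∈ SF, c x * x := by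
    intro v
    obtain ⟨w, hw⟩ := (hconn u₀ v).exists_walk_length_eq_dist
    obtain ⟨ε, c, h1, h2⟩ := key u₀ v w
    refine ⟨ε, c, ?_, h2⟩
    calc (∑ x ∈ SF, (c x).natAbs) ≤ w.length := h1
      _ = G.dist u₀ v := hw
      _ ≤ G.diam := G.dist_le_diam hediam
      _ = r := hr.symm
  choose ε c hc1 hc2 using rep
  -- natAbs coefficients on the subtype
  set m : V → ↥SF → ℕ := fun v x => (c v ↑x).natAbs with hm
  have hT : ∀ v, (∑ x : ↥SF, m v x) ≤ r := by
    intro v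
    rw [hm]
    calc (∑ x : ↥SF, (c v ↑x).natAbs) = ∑ x ∈ SF, (c v x).natAbs := by
          rw [← Finset.sum_attach SF fun x => (c v x).natAbs]; rfl
      _ ≤ r := hc1 v
  -- multiset encoding
  set μ : V → Multiset (Option ↥SF) := fun v =>
    Multiset.replicate (r - ∑ x : ↥SF, m v x) none +
      ∑ x : ↥SF, Multiset.replicate (m v x) (some x) with hμ
  have hcardμ : ∀ v, Multiset.card (μ v) = r := by
    intro v
    rw [hμ]
    simp only [Multiset.card_add, Multiset.card_replicate, multiset_card_finset_sum]
    have := hT v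
    omega
  have hcount : ∀ v (x : ↥SF), Multiset.count (some x) (μ v) = m v x := by
    intro v x
    rw [hμ]
    rw [Multiset.count_add, Multiset.count_replicate, if_neg (by simp), zero_add,
      Multiset.count_sum']
    have : ∀ y : ↥SF, Multiset.count (some x) (Multiset.replicate (m v y) (some y))
        = if x = y then m v y else 0 := by
      intro y; rw [Multiset.count_replicate]; simp [eq_comm]
    rw [Finset.sum_congr rfl fun y _ => this y, Finset.sum_ite_eq]
    simp
  -- the injective encoding
  set enc : V → Bool × (↥SF → Bool) × Sym (Option ↥SF) r :=
    fun v => (ε v, fun x => decide (c v ↑x < 0), ⟨μ v, hcardμ v⟩) with henc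
  have hinj : Function.Injective enc := by
    intro v v' h
    rw [henc] at h
    have hε : ε v = ε v' := congrArg Prod.fst h
    have hsign : (fun x : ↥SF => decide (c v ↑x < 0)) = fun x : ↥SF => decide (c v' ↑x < 0) :=
      congrArg (fun p => p.2.1) h
    have hsym : (⟨μ v, hcardμ v⟩ : Sym (Option ↥SF) r) = ⟨μ v', hcardμ v'⟩ :=
      congrArg (fun p => p.2.2) h
    have hμeq : μ v = μ v' := congrArg Subtype.val hsym
    have hceq : ∀ x ∈ SF, c v x = c v' x := by
      intro x hx
      have h1 : m v ⟨x, hx⟩ = m v' ⟨x, hx⟩ := by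
        rw [← hcount v ⟨x, hx⟩, ← hcount v' ⟨x, hx⟩, hμeq]
      have h2 : (c v x < 0) ↔ (c v' x < 0) := by
        have := congrFun hsign ⟨x, hx⟩
        simpa using this
      rw [hm] at h1
      simp only at h1
      omega
    apply hA
    rw [hc2 v, hc2 v', hε, Finset.sum_congr rfl fun x hx => by rw [hceq x hx]]
  -- cardinality bound
  have hcard : Fintype.card V ≤ 2 * (2 ^ s * (r + s).choose s) := by
    calc Fintype.card V ≤ Fintype.card (Bool × (↥SF → Bool) × Sym (Option ↥SF) r) :=
          Fintype.card_le_of_injective enc hinj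
      _ = 2 * (2 ^ s * (r + s).choose s) := by
          rw [Fintype.card_prod, Fintype.card_prod, Fintype.card_bool,
            Fintype.card_fun, Fintype.card_bool, Fintype.card_coe, hcardSF,
            Sym.card_sym_eq_choose, Fintype.card_option, Fintype.card_coe, hcardSF]
          congr 2
          have h1 : s + 1 + r - 1 = r + s := by omega
          rw [h1]
          exact Nat.choose_symm_add
  rw [div_le_iff₀ (by norm_num : (0:ℝ) < 2)]
  have : (Fintype.card V : ℝ) ≤ 2 * (2 ^ s * (r + s).choose s) := by
    exact_mod_cast hcard
  linarith
end

section
/- For every δ ∈ (0, 1/2) there exist C > 0 and n₀ such that for every n ≥ n₀ there exists a simple graph G on the vertex set {1, 2, …, n} with no isolated vertices which is a δ-edge-expander and satisfies |{u + v : uv ∈ E(G)}| ≤ C·log n, where the sums u + v are taken in ℤ and log denotes the natural logarithm. -/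
set_option maxHeartbeats 1000000


/-- `vol(S)`: the sum of the degrees of the vertices in `S`. -/
noncomputable def graphVol {V : Type*} [Fintype V] (G : SimpleGraph V) (S : Finset V) : ℕ :=
  ∑ v ∈ S, (G.neighborSet v).ncard

/-- `e(S, S̄)`: the number of edges of `G` with exactly one endpoint in `S` (each such
edge is counted once, as the ordered pair going from `S` to its complement). -/
noncomputable def edgeBoundary {V : Type*} [Fintype V] (G : SimpleGraph V) (S : Finset V) : ℕ :=
  {p : V × V | G.Adj p.1 p.2 ∧ p.1 ∈ S ∧ p.2 ∉ S}.ncard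

/-- `G` is a `δ`-edge-expander: `e(S, S̄) ≥ δ·min(vol S, vol S̄)` whenever both volumes
are nonzero. -/
def IsEdgeExpander {V : Type*} [Fintype V] [DecidableEq V] (G : SimpleGraph V)
    (δ : ℝ) : Prop :=
  ∀ S : Finset V, graphVol G S ≠ 0 → graphVol G Sᶜ ≠ 0 →
    δ * (min (graphVol G S) (graphVol G Sᶜ) : ℕ) ≤ (edgeBoundary G S : ℝ)

section AuxiliaryDevelopment

open Finset Complex

set_option linter.unusedSectionVars false
namespace Expander18

noncomputable def Complex.abs : AbsoluteValue ℂ ℝ where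
  toFun z := ‖z‖
  map_mul' := norm_mul
  nonneg' := norm_nonneg
  eq_zero' _ := norm_eq_zero
  add_le' := norm_add_le

@[simp] lemma Complex.abs_apply (z : ℂ) : Complex.abs z = ‖z‖ := rfl

lemma Complex.abs_conj (z : ℂ) : Complex.abs ((starRingEnd ℂ) z) = Complex.abs z :=
  _root_.Complex.norm_conj z

lemma Complex.normSq_eq_abs (z : ℂ) : _root_.Complex.normSq z = Complex.abs z ^ 2 :=
  _root_.Complex.normSq_eq_norm_sq z

lemma Complex.sq_abs (z : ℂ) : Complex.abs z ^ 2 = _root_.Complex.normSq z :=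
  _root_.Complex.sq_norm z

lemma Complex.abs_re_le_abs (z : ℂ) : |z.re| ≤ Complex.abs z :=
  _root_.Complex.abs_re_le_norm z

lemma Complex.abs_le_abs_re_add_abs_im (z : ℂ) : Complex.abs z ≤ |z.re| + |z.im| :=
  _root_.Complex.norm_le_abs_re_add_abs_im z

lemma Circle.abs_coe (z : Circle) : Complex.abs (z : ℂ) = 1 := _root_.Circle.norm_coe z


section Bias

variable {n : ℕ} [NeZero n]

noncomputable def ec (z : ZMod n) : ℂ := ZMod.stdAddChar z

lemma ec_add (a b : ZMod n) : ec (a + b) = ec a * ec b := AddChar.map_add_eq_mul _ a b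

lemma ec_zero : ec (0 : ZMod n) = 1 := AddChar.map_zero_eq_one _

lemma ec_abs (z : ZMod n) : Complex.abs (ec z) = 1 := by
  rw [ec, ZMod.stdAddChar_apply]; exact Circle.abs_coe _

lemma ec_ne_zero (z : ZMod n) : ec z ≠ 0 := by
  intro h; have := ec_abs z; rw [h] at this; simp at this

lemma ec_conj (z : ZMod n) : (starRingEnd ℂ) (ec z) = ec (-z) := by
  have h1 : ec z * ec (-z) = 1 := by rw [← ec_add, add_neg_cancel, ec_zero]
  have h2 : ec z * (starRingEnd ℂ) (ec z) = 1 := by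
    rw [Complex.mul_conj]
    norm_cast
    rw [Complex.normSq_eq_abs, ec_abs]; norm_num
  exact mul_left_cancel₀ (ec_ne_zero z) (h2.trans h1.symm)

lemma sum_ec_eq_zero {t : ZMod n} (ht : t ≠ 0) : ∑ x : ZMod n, ec (t * x) = 0 :=
  AddChar.sum_eq_zero_of_ne_one (ZMod.isPrimitive_stdAddChar n ht)

lemma sum_ec_ite (u : ZMod n) : ∑ t : ZMod n, ec (t * u) = if u = 0 then (n : ℂ) else 0 := by
  split_ifs with h
  · subst h
    simp only [mul_zero, ec_zero, Finset.sum_const, Finset.card_univ, ZMod.card, nsmul_eq_mul,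
      mul_one]
  · rw [← sum_ec_eq_zero h]
    exact Finset.sum_congr rfl fun x _ => by rw [mul_comm]

/-- pointwise: `e^y ≤ 1 + y + y²` for `|y| ≤ 1`. -/
lemma exp_quad {y : ℝ} (hy : |y| ≤ 1) : Real.exp y ≤ 1 + y + y ^ 2 := by
  have h := Real.exp_bound hy (n := 2) (by norm_num)
  have h2 : ∑ m ∈ Finset.range 2, y ^ m / m.factorial = 1 + y := by
    simp [Finset.sum_range_succ]
  rw [h2] at h
  norm_num [Nat.factorial] at h
  have h5 := (abs_sub_le_iff.mp h).1
  nlinarith [sq_nonneg y, _root_.sq_abs y]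

/-- single-coordinate mgf bound -/
lemma single_mgf {t : ZMod n} (ht : t ≠ 0) (c : ℂ) (hc : Complex.abs c = 1) {l : ℝ}
    (hl0 : 0 ≤ l) (hl1 : l ≤ 1) :
    ∑ x : ZMod n, Real.exp (l * (c * ec (t * x)).re) ≤ n * Real.exp (l ^ 2) := by
  have habs : ∀ x : ZMod n, |(c * ec (t * x)).re| ≤ 1 := by
    intro x
    calc |(c * ec (t * x)).re| ≤ Complex.abs (c * ec (t * x)) := Complex.abs_re_le_abs _
    _ = 1 := by rw [map_mul, hc, ec_abs, mul_one]
  have hsum0 : ∑ x : ZMod n, (c * ec (t * x)).re = 0 := by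
    rw [← Complex.re_sum, ← Finset.mul_sum, sum_ec_eq_zero ht, mul_zero, Complex.zero_re]
  have step : ∀ x : ZMod n, Real.exp (l * (c * ec (t * x)).re) ≤
      1 + l * (c * ec (t * x)).re + l ^ 2 := by
    intro x
    have hy : |l * (c * ec (t * x)).re| ≤ 1 := by
      rw [abs_mul, _root_.abs_of_nonneg hl0]
      calc l * |(c * ec (t * x)).re| ≤ 1 * 1 :=
        mul_le_mul hl1 (habs x) (abs_nonneg _) one_pos.le
      _ = 1 := by ring
    calc Real.exp (l * (c * ec (t * x)).re) ≤ 1 + l * (c * ec (t * x)).re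
          + (l * (c * ec (t * x)).re) ^ 2 := exp_quad hy
    _ ≤ 1 + l * (c * ec (t * x)).re + l ^ 2 := by
        have : (l * (c * ec (t * x)).re) ^ 2 ≤ l ^ 2 * 1 := by
          rw [mul_pow]
          have : ((c * ec (t * x)).re) ^ 2 ≤ 1 := by
            have := habs x
            nlinarith [this, abs_nonneg ((c * ec (t * x)).re),
              _root_.sq_abs ((c * ec (t*x)).re)]
          nlinarith [sq_nonneg l]
        nlinarith
  calc ∑ x : ZMod n, Real.exp (l * (c * ec (t * x)).re)
      ≤ ∑ x : ZMod n, (1 + l * (c * ec (t * x)).re + l ^ 2) :=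
        Finset.sum_le_sum fun x _ => step x
    _ = n + l * 0 + n * l ^ 2 := by
        rw [Finset.sum_add_distrib, Finset.sum_add_distrib, ← Finset.mul_sum, hsum0]
        simp [Finset.card_univ, ZMod.card]
    _ = n * (1 + l ^ 2) := by ring
    _ ≤ n * Real.exp (l ^ 2) := by
        have h1 : (1 : ℝ) + l ^ 2 ≤ Real.exp (l ^ 2) := by
          have := Real.add_one_le_exp (l ^ 2); linarith
        have : (0:ℝ) ≤ n := Nat.cast_nonneg n
        nlinarith

/-- product identity -/
lemma prod_identity {L : ℕ} (f : ZMod n → ℝ) :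
    ∑ a : Fin L → ZMod n, ∏ i, f (a i) = (∑ x : ZMod n, f x) ^ L := by
  calc ∑ a : Fin L → ZMod n, ∏ i, f (a i)
      = ∏ _i : Fin L, ∑ x : ZMod n, f x := by
        rw [Finset.prod_univ_sum (fun _ : Fin L => (Finset.univ : Finset (ZMod n)))
          (fun _ x => f x), Fintype.piFinset_univ]
    _ = (∑ x : ZMod n, f x) ^ L := by
        rw [Finset.prod_const, Finset.card_univ, Fintype.card_fin]


lemma chernoff_count (L : ℕ) {t : ZMod n} (ht : t ≠ 0) (c : ℂ) (hc : Complex.abs c = 1)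
    {l s : ℝ} (hl0 : 0 ≤ l) (hl1 : l ≤ 1) :
    ((Finset.univ.filter (fun a : Fin L → ZMod n =>
        s ≤ (c * ∑ i, ec (t * a i)).re)).card : ℝ) * Real.exp (l * s)
      ≤ ((n : ℝ) * Real.exp (l ^ 2)) ^ L := by
  classical
  set F := Finset.univ.filter (fun a : Fin L → ZMod n =>
      s ≤ (c * ∑ i, ec (t * a i)).re) with hF
  have hre : ∀ a : Fin L → ZMod n,
      l * (c * ∑ i, ec (t * a i)).re = ∑ i, l * (c * ec (t * a i)).re := by
    intro a
    rw [show c * ∑ i, ec (t * a i) = ∑ i, c * ec (t * a i) from Finset.mul_sum _ _ _,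
      Complex.re_sum, Finset.mul_sum]
  have step1 : (F.card : ℝ) * Real.exp (l * s)
      ≤ ∑ a ∈ F, Real.exp (l * (c * ∑ i, ec (t * a i)).re) := by
    have := Finset.card_nsmul_le_sum F
      (fun a => Real.exp (l * (c * ∑ i, ec (t * a i)).re)) (Real.exp (l * s))
      (fun a ha => by
        have hs := (Finset.mem_filter.mp ha).2
        exact Real.exp_le_exp.mpr (by nlinarith))
    rwa [nsmul_eq_mul] at this
  have step2 : ∑ a ∈ F, Real.exp (l * (c * ∑ i, ec (t * a i)).re)
      ≤ ∑ a : Fin L → ZMod n, Real.exp (l * (c * ∑ i, ec (t * a i)).re) :=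
    Finset.sum_le_sum_of_subset_of_nonneg (Finset.filter_subset _ _)
      (fun _ _ _ => (Real.exp_pos _).le)
  have step3 : ∑ a : Fin L → ZMod n, Real.exp (l * (c * ∑ i, ec (t * a i)).re)
      = (∑ x : ZMod n, Real.exp (l * (c * ec (t * x)).re)) ^ L := by
    rw [← prod_identity]
    refine Finset.sum_congr rfl fun a _ => ?_
    rw [hre a, Real.exp_sum]
  have step4 : (∑ x : ZMod n, Real.exp (l * (c * ec (t * x)).re)) ^ L
      ≤ ((n : ℝ) * Real.exp (l ^ 2)) ^ L := by
    apply pow_le_pow_left₀ (Finset.sum_nonneg fun x _ => (Real.exp_pos _).le)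
    exact single_mgf ht c hc hl0 hl1
  calc (F.card : ℝ) * Real.exp (l * s) ≤ _ := step1
    _ ≤ _ := step2
    _ = _ := step3
    _ ≤ _ := step4

lemma badbias_count (L : ℕ) {t : ZMod n} (ht : t ≠ 0) {ε : ℝ} (hε0 : 0 < ε) (hε1 : ε ≤ 1) :
    ((Finset.univ.filter (fun a : Fin L → ZMod n =>
      ε * L < Complex.abs (∑ i, ec (t * a i)))).card : ℝ)
      ≤ 4 * Real.exp (-(ε ^ 2 * L) / 16) * (n : ℝ) ^ L := by
  classical
  set C4 : Finset ℂ := {1, -1, Complex.I, -Complex.I} with hC4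
  have habs1 : ∀ c ∈ C4, Complex.abs c = 1 := by
    intro c hc
    rw [hC4] at hc
    simp only [Finset.mem_insert, Finset.mem_singleton] at hc
    rcases hc with rfl | rfl | rfl | rfl <;> simp
  have hsub : (Finset.univ.filter (fun a : Fin L → ZMod n =>
      ε * L < Complex.abs (∑ i, ec (t * a i))))
      ⊆ C4.biUnion (fun c => Finset.univ.filter (fun a : Fin L → ZMod n =>
          ε * L / 2 ≤ (c * ∑ i, ec (t * a i)).re)) := by
    intro a ha
    rw [Finset.mem_filter] at ha
    set z := ∑ i, ec (t * a i) with hz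
    have hz2 : ε * L < Complex.abs z := ha.2
    have hri : Complex.abs z ≤ |z.re| + |z.im| := Complex.abs_le_abs_re_add_abs_im z
    rw [Finset.mem_biUnion]
    rcases le_or_gt (Complex.abs z / 2) |z.re| with hre | hre
    · rcases le_or_gt 0 z.re with hsgn | hsgn
      · refine ⟨1, by simp [hC4], ?_⟩
        rw [Finset.mem_filter]
        refine ⟨Finset.mem_univ _, ?_⟩
        rw [one_mul]
        rw [_root_.abs_of_nonneg hsgn] at hre
        linarith
      · refine ⟨-1, by simp [hC4], ?_⟩
        rw [Finset.mem_filter]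
        refine ⟨Finset.mem_univ _, ?_⟩
        have : ((-1 : ℂ) * z).re = -z.re := by simp
        rw [this]
        rw [_root_.abs_of_neg hsgn] at hre
        linarith
    · have him : Complex.abs z / 2 ≤ |z.im| := by linarith
      rcases le_or_gt 0 z.im with hsgn | hsgn
      · refine ⟨-Complex.I, by simp [hC4], ?_⟩
        rw [Finset.mem_filter]
        refine ⟨Finset.mem_univ _, ?_⟩
        have : ((-Complex.I) * z).re = z.im := by simp
        rw [this]
        rw [_root_.abs_of_nonneg hsgn] at him
        linarith
      · refine ⟨Complex.I, by simp [hC4], ?_⟩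
        rw [Finset.mem_filter]
        refine ⟨Finset.mem_univ _, ?_⟩
        have : (Complex.I * z).re = -z.im := by simp
        rw [this]
        rw [_root_.abs_of_neg hsgn] at him
        linarith
  have hcard := Finset.card_le_card hsub
  have hcard2 := Finset.card_biUnion_le (s := C4) (t := fun c =>
    Finset.univ.filter (fun a : Fin L → ZMod n =>
      ε * L / 2 ≤ (c * ∑ i, ec (t * a i)).re))
  have hone : ∀ c ∈ C4, ((Finset.univ.filter (fun a : Fin L → ZMod n =>
      ε * L / 2 ≤ (c * ∑ i, ec (t * a i)).re)).card : ℝ)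
      ≤ Real.exp (-(ε ^ 2 * L) / 16) * (n : ℝ) ^ L := by
    intro c hc
    have hl0 : (0:ℝ) ≤ ε / 4 := by linarith
    have hl1 : ε / 4 ≤ 1 := by linarith
    have h := chernoff_count L ht c (habs1 c hc) hl0 hl1 (s := ε * L / 2)
    have hexp : ((n : ℝ) * Real.exp ((ε / 4) ^ 2)) ^ L
        = (n : ℝ) ^ L * Real.exp (ε ^ 2 / 16 * L) := by
      rw [mul_pow, ← Real.exp_nat_mul]
      ring_nf
    rw [hexp] at h
    have hpos : 0 < Real.exp (ε / 4 * (ε * L / 2)) := Real.exp_pos _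
    have key : (n : ℝ) ^ L * Real.exp (ε ^ 2 / 16 * L)
        = (Real.exp (-(ε ^ 2 * L) / 16) * (n : ℝ) ^ L) * Real.exp (ε / 4 * (ε * L / 2)) := by
      have harg : ε ^ 2 / 16 * (L:ℝ) = -(ε ^ 2 * L) / 16 + ε / 4 * (ε * L / 2) := by ring
      rw [mul_comm (Real.exp (-(ε ^ 2 * L) / 16)) ((n:ℝ)^L), mul_assoc, ← Real.exp_add, ← harg]
    rw [key] at h
    exact le_of_mul_le_mul_right h hpos
  calc ((Finset.univ.filter (fun a : Fin L → ZMod n =>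
      ε * L < Complex.abs (∑ i, ec (t * a i)))).card : ℝ)
      ≤ ((C4.biUnion fun c => Finset.univ.filter (fun a : Fin L → ZMod n =>
          ε * L / 2 ≤ (c * ∑ i, ec (t * a i)).re)).card : ℝ) := Nat.cast_le.mpr hcard
    _ ≤ ((∑ c ∈ C4, (Finset.univ.filter (fun a : Fin L → ZMod n =>
          ε * L / 2 ≤ (c * ∑ i, ec (t * a i)).re)).card : ℕ) : ℝ) := Nat.cast_le.mpr hcard2
    _ = ∑ c ∈ C4, ((Finset.univ.filter (fun a : Fin L → ZMod n =>
          ε * L / 2 ≤ (c * ∑ i, ec (t * a i)).re)).card : ℝ) := by push_cast; rfl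
    _ ≤ ∑ _c ∈ C4, Real.exp (-(ε ^ 2 * L) / 16) * (n : ℝ) ^ L := Finset.sum_le_sum hone
    _ ≤ 4 * Real.exp (-(ε ^ 2 * L) / 16) * (n : ℝ) ^ L := by
        rw [Finset.sum_const]
        have : C4.card ≤ 4 := by
          apply le_trans (Finset.card_insert_le _ _)
          apply Nat.succ_le_succ
          apply le_trans (Finset.card_insert_le _ _)
          apply Nat.succ_le_succ
          apply le_trans (Finset.card_insert_le _ _)
          apply Nat.succ_le_succ
          simp
        rw [nsmul_eq_mul]
        have hnn : (0:ℝ) ≤ Real.exp (-(ε ^ 2 * L) / 16) * (n : ℝ) ^ L :=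
          mul_nonneg (Real.exp_pos _).le (pow_nonneg (Nat.cast_nonneg n) L)
        calc (C4.card : ℝ) * (Real.exp (-(ε ^ 2 * L) / 16) * (n : ℝ) ^ L)
            ≤ 4 * (Real.exp (-(ε ^ 2 * L) / 16) * (n : ℝ) ^ L) := by
              apply mul_le_mul_of_nonneg_right _ hnn
              exact_mod_cast this
          _ = 4 * Real.exp (-(ε ^ 2 * L) / 16) * (n : ℝ) ^ L := by ring


lemma pair_count (L : ℕ) {i j : Fin L} (hij : i ≠ j) :
    (Finset.univ.filter (fun a : Fin L → ZMod n => a i = a j)).card ≤ n ^ (L - 1) := by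
  classical
  have hmaps : ∀ a ∈ Finset.univ.filter (fun a : Fin L → ZMod n => a i = a j),
      (fun k => if k = i then 0 else a k) ∈
        Fintype.piFinset (fun k : Fin L => if k = i then ({0} : Finset (ZMod n)) else univ) := by
    intro a _
    rw [Fintype.mem_piFinset]
    intro k
    by_cases hk : k = i <;> simp [hk]
  have hinj : ∀ a ∈ Finset.univ.filter (fun a : Fin L → ZMod n => a i = a j),
      ∀ b ∈ Finset.univ.filter (fun a : Fin L → ZMod n => a i = a j),
      (fun k => if k = i then (0 : ZMod n) else a k) = (fun k => if k = i then 0 else b k)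
        → a = b := by
    intro a ha b hb hab
    rw [Finset.mem_filter] at ha hb
    funext k
    have happ : ∀ k', (if k' = i then (0 : ZMod n) else a k') = (if k' = i then 0 else b k') :=
      fun k' => congrFun hab k'
    by_cases hk : k = i
    · subst hk
      have := happ j
      rw [if_neg (fun h => hij h.symm), if_neg (fun h => hij h.symm)] at this
      rw [ha.2, hb.2]
      exact this
    · have := happ k
      rwa [if_neg hk, if_neg hk] at this
  have hcard := Finset.card_le_card_of_injOn _ hmaps hinj
  refine le_trans hcard ?_
  rw [Fintype.card_piFinset]
  have : ∀ k : Fin L, (if k = i then ({0} : Finset (ZMod n)) else univ).card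
      = if k = i then 1 else n := by
    intro k
    by_cases hk : k = i <;> simp [hk, ZMod.card]
  rw [Finset.prod_congr rfl (fun k _ => this k)]
  have hcarde : (Finset.univ.erase i).card = L - 1 := by
    rw [Finset.card_erase_of_mem (Finset.mem_univ i), Finset.card_univ, Fintype.card_fin]
  rw [← Finset.mul_prod_erase Finset.univ _ (Finset.mem_univ i), if_pos rfl, one_mul]
  refine le_of_eq ?_
  calc ∏ k ∈ Finset.univ.erase i, (if k = i then 1 else n)
      = ∏ _k ∈ Finset.univ.erase i, n :=
        Finset.prod_congr rfl (fun k hk => if_neg (Finset.ne_of_mem_erase hk))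
    _ = n ^ (L - 1) := by rw [Finset.prod_const, hcarde]

lemma exists_good (L : ℕ) (hL : 1 ≤ L) {ε : ℝ} (hε0 : 0 < ε) (hε1 : ε ≤ 1)
    (hch : 4 * n * Real.exp (-(ε ^ 2 * L) / 16) ≤ 1 / 2) (hcol : 2 * L ^ 2 ≤ n) :
    ∃ A : Finset (ZMod n), A.card = L ∧
      ∀ t : ZMod n, t ≠ 0 → Complex.abs (∑ s ∈ A, ec (t * s)) ≤ ε * L := by
  classical
  set Col := Finset.univ.filter (fun a : Fin L → ZMod n => ¬ Function.Injective a) with hCol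
  set BB := Finset.univ.filter (fun a : Fin L → ZMod n =>
    ∃ t : ZMod n, t ≠ 0 ∧ ε * L < Complex.abs (∑ i, ec (t * a i))) with hBB
  -- collision count
  have hcolcard : Col.card ≤ L ^ 2 * n ^ (L - 1) := by
    have hsub : Col ⊆ Finset.univ.offDiag.biUnion
        (fun p : Fin L × Fin L => Finset.univ.filter (fun a => a p.1 = a p.2)) := by
      intro a ha
      rw [hCol, Finset.mem_filter] at ha
      obtain ⟨i, j, hval, hij⟩ := Function.not_injective_iff.mp ha.2
      rw [Finset.mem_biUnion]
      exact ⟨(i, j), Finset.mem_offDiag.mpr ⟨Finset.mem_univ _, Finset.mem_univ _, hij⟩,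
        Finset.mem_filter.mpr ⟨Finset.mem_univ _, hval⟩⟩
    refine le_trans (Finset.card_le_card hsub) (le_trans (Finset.card_biUnion_le) ?_)
    calc ∑ p ∈ Finset.univ.offDiag, (Finset.univ.filter
          (fun a : Fin L → ZMod n => a p.1 = a p.2)).card
        ≤ ∑ p ∈ Finset.univ.offDiag, n ^ (L - 1) := by
          apply Finset.sum_le_sum
          intro p hp
          exact pair_count L (Finset.mem_offDiag.mp hp).2.2
      _ = Finset.univ.offDiag.card * n ^ (L - 1) := by rw [Finset.sum_const, smul_eq_mul]
      _ ≤ L ^ 2 * n ^ (L - 1) := by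
          apply Nat.mul_le_mul_right
          rw [Finset.offDiag_card, Finset.card_univ, Fintype.card_fin]
          calc L * L - L ≤ L * L := Nat.sub_le _ _
            _ = L ^ 2 := (pow_two L).symm
  -- bias count, real
  have hBBcard : (BB.card : ℝ)
      ≤ ((n : ℝ) - 1) * (4 * Real.exp (-(ε ^ 2 * L) / 16) * (n : ℝ) ^ L) := by
    have hsub : BB ⊆ (Finset.univ.erase (0 : ZMod n)).biUnion
        (fun t => Finset.univ.filter (fun a : Fin L → ZMod n =>
          ε * L < Complex.abs (∑ i, ec (t * a i)))) := by
      intro a ha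
      rw [hBB, Finset.mem_filter] at ha
      obtain ⟨t, ht, hbig⟩ := ha.2
      rw [Finset.mem_biUnion]
      exact ⟨t, Finset.mem_erase.mpr ⟨ht, Finset.mem_univ _⟩,
        Finset.mem_filter.mpr ⟨Finset.mem_univ _, hbig⟩⟩
    calc (BB.card : ℝ)
        ≤ (((Finset.univ.erase (0 : ZMod n)).biUnion
            (fun t => Finset.univ.filter (fun a : Fin L → ZMod n =>
              ε * L < Complex.abs (∑ i, ec (t * a i))))).card : ℝ) :=
          Nat.cast_le.mpr (Finset.card_le_card hsub)
      _ ≤ ((∑ t ∈ Finset.univ.erase (0 : ZMod n), (Finset.univ.filter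
            (fun a : Fin L → ZMod n =>
              ε * L < Complex.abs (∑ i, ec (t * a i)))).card : ℕ) : ℝ) :=
          Nat.cast_le.mpr Finset.card_biUnion_le
      _ = ∑ t ∈ Finset.univ.erase (0 : ZMod n), ((Finset.univ.filter
            (fun a : Fin L → ZMod n =>
              ε * L < Complex.abs (∑ i, ec (t * a i)))).card : ℝ) := by push_cast; rfl
      _ ≤ ∑ _t ∈ Finset.univ.erase (0 : ZMod n),
            4 * Real.exp (-(ε ^ 2 * L) / 16) * (n : ℝ) ^ L := by
          apply Finset.sum_le_sum
          intro t ht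
          exact badbias_count L (Finset.mem_erase.mp ht).1 hε0 hε1
      _ = ((n : ℝ) - 1) * (4 * Real.exp (-(ε ^ 2 * L) / 16) * (n : ℝ) ^ L) := by
          rw [Finset.sum_const, nsmul_eq_mul,
            Finset.card_erase_of_mem (Finset.mem_univ _), Finset.card_univ, ZMod.card]
          congr 1
          have h1 : 1 ≤ n := Nat.one_le_iff_ne_zero.mpr (NeZero.ne n)
          push_cast [Nat.cast_sub h1]
          ring
  -- totals
  have hn1 : 1 ≤ n := Nat.one_le_iff_ne_zero.mpr (NeZero.ne n)
  have hBpos : 0 < 4 * Real.exp (-(ε ^ 2 * L) / 16) * (n : ℝ) ^ L := by positivity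
  have hcolR : ((L ^ 2 * n ^ (L - 1) : ℕ) : ℝ) ≤ (n : ℝ) ^ L / 2 := by
    have hnat : 2 * (L ^ 2 * n ^ (L - 1)) ≤ n ^ L := by
      calc 2 * (L ^ 2 * n ^ (L - 1)) = (2 * L ^ 2) * n ^ (L - 1) := by ring
        _ ≤ n * n ^ (L - 1) := Nat.mul_le_mul_right _ hcol
        _ = n ^ L := by
            rw [← pow_succ']
            congr 1
            omega
    have hr : ((2 * (L ^ 2 * n ^ (L - 1)) : ℕ) : ℝ) ≤ ((n ^ L : ℕ) : ℝ) := Nat.cast_le.mpr hnat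
    push_cast at hr ⊢
    linarith
  have hnB : (n : ℝ) * (4 * Real.exp (-(ε ^ 2 * L) / 16) * (n : ℝ) ^ L) ≤ (n : ℝ) ^ L / 2 := by
    have hp : (0:ℝ) ≤ (n : ℝ) ^ L := by positivity
    calc (n : ℝ) * (4 * Real.exp (-(ε ^ 2 * L) / 16) * (n : ℝ) ^ L)
        = (4 * n * Real.exp (-(ε ^ 2 * L) / 16)) * (n : ℝ) ^ L := by ring
      _ ≤ (1 / 2) * (n : ℝ) ^ L := mul_le_mul_of_nonneg_right hch hp
      _ = (n : ℝ) ^ L / 2 := by ring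
  -- the bad set
  set Bad := Col ∪ BB with hBad
  have hbadlt : (Bad.card : ℝ) < (n : ℝ) ^ L := by
    calc (Bad.card : ℝ) ≤ (Col.card : ℝ) + (BB.card : ℝ) := by
          rw [← Nat.cast_add]
          exact Nat.cast_le.mpr (Finset.card_union_le _ _)
      _ ≤ (n : ℝ) ^ L / 2 + (((n : ℝ) - 1) *
            (4 * Real.exp (-(ε ^ 2 * L) / 16) * (n : ℝ) ^ L)) := by
          apply add_le_add _ hBBcard
          exact le_trans (Nat.cast_le.mpr hcolcard) hcolR
      _ < (n : ℝ) ^ L := by nlinarith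
  have hx : ∃ a : Fin L → ZMod n, a ∉ Bad := by
    by_contra hcon
    push_neg at hcon
    have hsub : (Finset.univ : Finset (Fin L → ZMod n)) ⊆ Bad := fun a _ => hcon a
    have hcard := Finset.card_le_card hsub
    rw [Finset.card_univ] at hcard
    have hcf : Fintype.card (Fin L → ZMod n) = n ^ L := by
      rw [Fintype.card_fun, ZMod.card, Fintype.card_fin]
    rw [hcf] at hcard
    have : ((n ^ L : ℕ) : ℝ) ≤ (Bad.card : ℝ) := Nat.cast_le.mpr hcard
    push_cast at this
    linarith
  obtain ⟨a, ha⟩ := hx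
  rw [hBad, Finset.mem_union] at ha
  push_neg at ha
  obtain ⟨ha1, ha2⟩ := ha
  rw [hCol, Finset.mem_filter] at ha1
  push_neg at ha1
  have hainj : Function.Injective a := ha1 (Finset.mem_univ a)
  rw [hBB, Finset.mem_filter] at ha2
  push_neg at ha2
  have hbias : ∀ t : ZMod n, t ≠ 0 → Complex.abs (∑ i, ec (t * a i)) ≤ ε * L :=
    fun t ht => ha2 (Finset.mem_univ a) t ht
  refine ⟨Finset.image a Finset.univ, ?_, ?_⟩
  · rw [Finset.card_image_of_injective _ hainj, Finset.card_univ, Fintype.card_fin]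
  · intro t ht
    rw [Finset.sum_image (fun x _ y _ h => hainj h)]
    exact hbias t ht





section Fourier

variable {n : ℕ} [NeZero n]

lemma conj_sum_ec (B : Finset (ZMod n)) (t : ZMod n) :
    (starRingEnd ℂ) (∑ s ∈ B, ec (t * s)) = ∑ s ∈ B, ec (-(t * s)) := by
  rw [map_sum]
  exact Finset.sum_congr rfl fun s _ => ec_conj _

lemma sum_ec_pair (T : Finset (ZMod n)) (t : ZMod n) :
    (∑ x ∈ T, ec (t * x)) * (∑ y ∈ T, ec (t * y))
      = ∑ q ∈ T ×ˢ T, ec (t * q.1) * ec (t * q.2) := by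
  rw [Finset.sum_mul_sum]
  rw [Finset.sum_product]

lemma parseval (T : Finset (ZMod n)) :
    ∑ t : ZMod n, Complex.normSq (∑ x ∈ T, ec (t * x)) = (n : ℝ) * T.card := by
  have key : ∑ t : ZMod n, ((Complex.normSq (∑ x ∈ T, ec (t * x)) : ℝ) : ℂ)
      = (n : ℂ) * T.card := by
    have h1 : ∀ t : ZMod n, ((Complex.normSq (∑ x ∈ T, ec (t * x)) : ℝ) : ℂ)
        = ∑ q ∈ T ×ˢ T, ec (t * (q.1 - q.2)) := by
      intro t
      rw [← Complex.mul_conj, conj_sum_ec, Finset.sum_mul_sum, ← Finset.sum_product']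
      apply Finset.sum_congr rfl
      intro q _
      rw [← ec_add]
      congr 1
      ring
    rw [Finset.sum_congr rfl fun t _ => h1 t]
    rw [Finset.sum_comm]
    have h2 : ∀ q ∈ T ×ˢ T, ∑ t : ZMod n, ec (t * (q.1 - q.2))
        = if q.1 - q.2 = 0 then (n : ℂ) else 0 := fun q _ => sum_ec_ite _
    rw [Finset.sum_congr rfl h2]
    have h3 : ∀ q ∈ T ×ˢ T, (if q.1 - q.2 = 0 then (n : ℂ) else 0)
        = if q.1 = q.2 then (n : ℂ) else 0 := by
      intro q _
      congr 1
      · exact propext sub_eq_zero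
    rw [Finset.sum_congr rfl h3, Finset.sum_product]
    have h4 : ∀ x ∈ T, (∑ y ∈ T, if x = y then (n : ℂ) else 0) = (n : ℂ) := by
      intro x hx
      rw [Finset.sum_ite_eq T x (fun _ => (n : ℂ))]
      exact if_pos hx
    rw [Finset.sum_congr rfl h4, Finset.sum_const, nsmul_eq_mul, mul_comm]
  have := congrArg Complex.re key
  rw [Complex.re_sum] at this
  simpa using this

lemma count_pairs_bound (A T : Finset (ZMod n)) {ε : ℝ} (hε : 0 ≤ ε)
    (hbias : ∀ t : ZMod n, t ≠ 0 → Complex.abs (∑ s ∈ A, ec (t * s)) ≤ ε * A.card) :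
    (((T ×ˢ T).filter (fun q : ZMod n × ZMod n => q.1 + q.2 ∈ A)).card : ℝ) * n
      ≤ (A.card : ℝ) * T.card ^ 2 + ε * A.card * (n * T.card) := by
  classical
  set FT : ZMod n → ℂ := fun t => ∑ x ∈ T, ec (t * x) with hFT
  set GA : ZMod n → ℂ := fun t => ∑ s ∈ A, ec (t * s) with hGA
  set cnt := ((T ×ˢ T).filter (fun q : ZMod n × ZMod n => q.1 + q.2 ∈ A)).card with hcnt
  -- main identity
  have key : (cnt : ℂ) * n = ∑ t : ZMod n, FT t * FT t * (starRingEnd ℂ) (GA t) := by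
    have rhs1 : ∀ t : ZMod n, FT t * FT t * (starRingEnd ℂ) (GA t)
        = ∑ q ∈ T ×ˢ T, ∑ s ∈ A, ec (t * (q.1 + q.2 - s)) := by
      intro t
      rw [hFT, hGA]
      simp only
      rw [conj_sum_ec, sum_ec_pair, Finset.sum_mul]
      apply Finset.sum_congr rfl
      intro q _
      rw [Finset.mul_sum]
      apply Finset.sum_congr rfl
      intro s _
      rw [show t * (q.1 + q.2 - s) = t * q.1 + (t * q.2 + -(t * s)) by ring,
        ec_add, ec_add, mul_assoc]
    rw [Finset.sum_congr rfl fun t _ => rhs1 t]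
    rw [Finset.sum_comm]
    have swap2 : ∀ q ∈ T ×ˢ T, ∑ t : ZMod n, ∑ s ∈ A, ec (t * (q.1 + q.2 - s))
        = ∑ s ∈ A, ∑ t : ZMod n, ec (t * (q.1 + q.2 - s)) := fun q _ => by rw [Finset.sum_comm]
    rw [Finset.sum_congr rfl swap2]
    have inner : ∀ q ∈ T ×ˢ T, ∑ s ∈ A, ∑ t : ZMod n, ec (t * (q.1 + q.2 - s))
        = if q.1 + q.2 ∈ A then (n : ℂ) else 0 := by
      intro q _
      have h1 : ∀ s ∈ A, ∑ t : ZMod n, ec (t * (q.1 + q.2 - s))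
          = if q.1 + q.2 = s then (n : ℂ) else 0 := by
        intro s _
        rw [sum_ec_ite]
        congr 1
        exact propext sub_eq_zero
      rw [Finset.sum_congr rfl h1]
      rw [Finset.sum_ite_eq A (q.1 + q.2) (fun _ => (n : ℂ))]
    rw [Finset.sum_congr rfl inner]
    rw [← Finset.sum_filter]
    rw [Finset.sum_const, nsmul_eq_mul, ← hcnt]
  -- zero term
  have hFT0 : FT 0 = (T.card : ℂ) := by
    rw [hFT]
    simp only [zero_mul, ec_zero]
    rw [Finset.sum_const, nsmul_eq_mul, mul_one]
  have hGA0 : (starRingEnd ℂ) (GA 0) = (A.card : ℂ) := by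
    rw [hGA]
    simp only [zero_mul, ec_zero]
    rw [Finset.sum_const, nsmul_eq_mul, mul_one, Complex.conj_natCast]
  -- split the sum
  have split : (cnt : ℂ) * n - (T.card : ℂ) * T.card * A.card
      = ∑ t ∈ Finset.univ.erase (0 : ZMod n), FT t * FT t * (starRingEnd ℂ) (GA t) := by
    rw [key, ← Finset.add_sum_erase _ _ (Finset.mem_univ (0 : ZMod n)), hFT0, hGA0]
    ring
  -- abs bound on the tail
  have tail : Complex.abs ((cnt : ℂ) * n - (T.card : ℂ) * T.card * A.card)
      ≤ ε * A.card * (n * T.card) := by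
    rw [split]
    refine le_trans (Complex.abs.sum_le _ _) ?_
    have hterm : ∀ t ∈ Finset.univ.erase (0 : ZMod n),
        Complex.abs (FT t * FT t * (starRingEnd ℂ) (GA t))
          ≤ Complex.normSq (FT t) * (ε * A.card) := by
      intro t ht
      rw [map_mul, map_mul, Complex.abs_conj]
      have h1 : Complex.abs (GA t) ≤ ε * A.card := hbias t (Finset.mem_erase.mp ht).1
      have h2 : Complex.abs (FT t) * Complex.abs (FT t) = Complex.normSq (FT t) := by
        rw [← Complex.sq_abs, sq]
      rw [mul_assoc] at *
      calc Complex.abs (FT t) * (Complex.abs (FT t) * Complex.abs (GA t))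
          ≤ Complex.abs (FT t) * (Complex.abs (FT t) * (ε * A.card)) := by
            apply mul_le_mul_of_nonneg_left _ (AbsoluteValue.nonneg _ _)
            exact mul_le_mul_of_nonneg_left h1 (AbsoluteValue.nonneg _ _)
        _ = Complex.normSq (FT t) * (ε * A.card) := by rw [← mul_assoc, h2]
    refine le_trans (Finset.sum_le_sum hterm) ?_
    rw [← Finset.sum_mul]
    have hsub : ∑ t ∈ Finset.univ.erase (0 : ZMod n), Complex.normSq (FT t)
        ≤ (n : ℝ) * T.card := by
      rw [← parseval T]
      apply Finset.sum_le_sum_of_subset_of_nonneg (Finset.erase_subset _ _)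
      intro t _ _
      exact Complex.normSq_nonneg _
    calc (∑ t ∈ Finset.univ.erase (0 : ZMod n), Complex.normSq (FT t)) * (ε * A.card)
        ≤ ((n : ℝ) * T.card) * (ε * A.card) := by
          apply mul_le_mul_of_nonneg_right hsub
          positivity
      _ = ε * A.card * (n * T.card) := by ring
  -- back to the reals
  have hreal : |(cnt : ℝ) * n - (T.card : ℝ) * T.card * A.card| ≤ ε * A.card * (n * T.card) := by
    have hco : ((cnt : ℝ) * n - (T.card : ℝ) * T.card * A.card : ℝ)
        = (((cnt : ℂ) * n - (T.card : ℂ) * T.card * A.card)).re := by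
      push_cast
      simp
    have him : (((cnt : ℂ) * n - (T.card : ℂ) * T.card * A.card)).im = 0 := by
      push_cast
      simp
    have habs := Complex.abs_re_le_abs ((cnt : ℂ) * n - (T.card : ℂ) * T.card * A.card)
    rw [hco]
    exact le_trans habs tail
  have := abs_le.mp hreal
  have h2 : (cnt : ℝ) * n ≤ (T.card : ℝ) * T.card * A.card + ε * A.card * (n * T.card) := by
    linarith [this.2]
  calc (cnt : ℝ) * n ≤ (T.card : ℝ) * T.card * A.card + ε * A.card * (n * T.card) := h2
    _ = (A.card : ℝ) * T.card ^ 2 + ε * A.card * (n * T.card) := by ring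

end Fourier

end Bias

section Graph

variable (n : ℕ) [NeZero n]

def lab (v : Fin n) : ZMod n := (((v : ℕ) + 1 : ℕ) : ZMod n)

def labInv (z : ZMod n) : Fin n := ⟨(z - 1).val, ZMod.val_lt _⟩

lemma lab_labInv (z : ZMod n) : lab n (labInv n z) = z := by
  rw [lab, labInv]
  push_cast
  rw [ZMod.natCast_rightInverse (z - 1)]
  ring

lemma labInv_lab (v : Fin n) : labInv n (lab n v) = v := by
  rw [lab, labInv]
  apply Fin.ext
  simp only
  have : (((v : ℕ) + 1 : ℕ) : ZMod n) - 1 = ((v : ℕ) : ZMod n) := by push_cast; ring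
  rw [this, ZMod.val_cast_of_lt v.isLt]

lemma lab_injective : Function.Injective (lab n) :=
  Function.LeftInverse.injective (labInv_lab n)

variable (A : Finset (ZMod n))

def expGraph : SimpleGraph (Fin n) where
  Adj u v := u ≠ v ∧ lab n u + lab n v ∈ A
  symm := by
    constructor
    intro u v h
    exact ⟨h.1.symm, by rw [add_comm]; exact h.2⟩
  loopless := ⟨fun v h => h.1 rfl⟩

instance : DecidableRel (expGraph n A).Adj := fun u v =>
  inferInstanceAs (Decidable (u ≠ v ∧ lab n u + lab n v ∈ A))

lemma expGraph_adj {u v : Fin n} :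
    (expGraph n A).Adj u v ↔ u ≠ v ∧ lab n u + lab n v ∈ A := Iff.rfl

lemma degree_eq (v : Fin n) :
    (expGraph n A).degree v = (A.erase (lab n v + lab n v)).card := by
  classical
  rw [← SimpleGraph.card_neighborFinset_eq_degree]
  apply Finset.card_bij' (fun w _ => lab n v + lab n w)
    (fun y _ => labInv n (y - lab n v))
  · intro w hw
    rw [SimpleGraph.mem_neighborFinset, expGraph_adj] at hw
    refine Finset.mem_erase.mpr ⟨?_, hw.2⟩
    intro hcon
    exact hw.1 (lab_injective n (add_left_cancel hcon)).symm
  · intro y hy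
    rw [Finset.mem_erase] at hy
    rw [SimpleGraph.mem_neighborFinset, expGraph_adj]
    constructor
    · intro hcon
      apply hy.1
      have h2 := congrArg (lab n) hcon
      rw [lab_labInv] at h2
      have h3 : y - lab n v = lab n v := h2.symm
      exact sub_eq_iff_eq_add.mp h3
    · rw [lab_labInv]
      convert hy.2 using 2
      ring
  · intro w hw
    rw [add_sub_cancel_left, labInv_lab]
  · intro y hy
    rw [lab_labInv]
    ring

lemma degree_le (v : Fin n) : (expGraph n A).degree v ≤ A.card := by
  rw [degree_eq]; exact Finset.card_erase_le

lemma degree_ge (v : Fin n) : A.card - 1 ≤ (expGraph n A).degree v := by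
  rw [degree_eq]
  by_cases h : lab n v + lab n v ∈ A
  · rw [Finset.card_erase_of_mem h]
  · rw [Finset.erase_eq_of_notMem h]
    exact Nat.sub_le _ _

-- pair sets
variable {n A}

def PS (S : Finset (Fin n)) : Finset (Fin n × Fin n) :=
  Finset.univ.filter (fun p => (expGraph n A).Adj p.1 p.2 ∧ p.1 ∈ S)

def FS (S : Finset (Fin n)) : Finset (Fin n × Fin n) :=
  Finset.univ.filter (fun p => (expGraph n A).Adj p.1 p.2 ∧ p.1 ∈ S ∧ p.2 ∉ S)

def IS (S : Finset (Fin n)) : Finset (Fin n × Fin n) :=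
  Finset.univ.filter (fun p => ((expGraph n A).Adj p.1 p.2 ∧ p.1 ∈ S) ∧ p.2 ∈ S)

lemma graphVol_eq (S : Finset (Fin n)) :
    graphVol (expGraph n A) S = ∑ v ∈ S, (expGraph n A).degree v := by
  apply Finset.sum_congr rfl
  intro v _
  rw [← SimpleGraph.card_neighborFinset_eq_degree, SimpleGraph.neighborFinset_def,
    Set.ncard_eq_toFinset_card']

lemma PS_card (S : Finset (Fin n)) :
    (PS (A := A) S).card = ∑ v ∈ S, (expGraph n A).degree v := by
  rw [Finset.card_eq_sum_card_fiberwise (f := Prod.fst) (t := S)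
    (fun p hp => (Finset.mem_filter.mp hp).2.2)]
  apply Finset.sum_congr rfl
  intro v hv
  rw [← SimpleGraph.card_neighborFinset_eq_degree]
  apply Finset.card_bij' (fun p _ => p.2) (fun w _ => (v, w))
  case hi =>
    intro p hp
    simp only [Finset.mem_filter, PS] at hp
    obtain ⟨⟨_, hadj, _⟩, h1⟩ := hp
    rw [SimpleGraph.mem_neighborFinset]
    rwa [← h1]
  case hj =>
    intro w hw
    rw [SimpleGraph.mem_neighborFinset] at hw
    refine Finset.mem_filter.mpr ⟨?_, rfl⟩
    simp only [PS, Finset.mem_filter]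
    exact ⟨Finset.mem_univ _, hw, hv⟩
  case left_inv =>
    intro p hp
    simp only [Finset.mem_filter] at hp
    rw [← hp.2]
  case right_inv =>
    intro w _
    rfl

lemma PS_split (S : Finset (Fin n)) :
    (PS (A := A) S).card = (IS (A := A) S).card + (FS (A := A) S).card := by
  classical
  have h := Finset.card_filter_add_card_filter_not
    (s := PS (A := A) S) (p := fun p => p.2 ∈ S)
  have h1 : (PS (A := A) S).filter (fun p => p.2 ∈ S) = IS (A := A) S := by
    simp only [PS, IS, Finset.filter_filter]
  have h2 : (PS (A := A) S).filter (fun p => ¬ p.2 ∈ S) = FS (A := A) S := by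
    simp only [PS, FS, Finset.filter_filter]
    apply Finset.filter_congr
    intro p _
    tauto
  rw [h1, h2] at h
  omega

lemma edgeBoundary_eq (S : Finset (Fin n)) :
    edgeBoundary (expGraph n A) S = (FS (A := A) S).card := by
  rw [edgeBoundary, ← Set.ncard_coe_finset]
  congr 1
  ext p
  simp only [Set.mem_setOf_eq, Finset.coe_filter, FS, Finset.mem_univ, true_and,
    Finset.mem_coe, Finset.mem_filter]

lemma FS_compl_card (S : Finset (Fin n)) :
    (FS (A := A) Sᶜ).card = (FS (A := A) S).card := by
  classical
  apply Finset.card_bij' (fun p _ => (p.2, p.1)) (fun p _ => (p.2, p.1))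
  case hi =>
    intro p hp
    simp only [FS, Finset.mem_filter] at hp ⊢
    obtain ⟨_, hadj, h1, h2⟩ := hp
    rw [Finset.mem_compl] at h1
    rw [Finset.mem_compl, not_not] at h2
    exact ⟨Finset.mem_univ _, hadj.symm, h2, h1⟩
  case hj =>
    intro p hp
    simp only [FS, Finset.mem_filter] at hp ⊢
    obtain ⟨_, hadj, h1, h2⟩ := hp
    refine ⟨Finset.mem_univ _, hadj.symm, ?_, ?_⟩
    · rw [Finset.mem_compl]; exact h2
    · rw [Finset.mem_compl, not_not]; exact h1
  case left_inv => intro p _; rfl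
  case right_inv => intro p _; rfl

/-- number of ordered pairs of labels in `T × T` whose sum lies in `A` -/
def NS (T : Finset (ZMod n)) : Finset (ZMod n × ZMod n) :=
  (T ×ˢ T).filter (fun q => q.1 + q.2 ∈ A)

lemma IS_card_le (S : Finset (Fin n)) :
    (IS (A := A) S).card ≤ (NS (A := A) (S.image (lab n))).card := by
  apply Finset.card_le_card_of_injOn (fun p => (lab n p.1, lab n p.2))
  · intro p hp
    rw [Finset.mem_coe, IS, Finset.mem_filter] at hp
    obtain ⟨_, ⟨hadj, h1⟩, h2⟩ := hp
    rw [Finset.mem_coe, NS, Finset.mem_filter, Finset.mem_product]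
    exact ⟨⟨Finset.mem_image_of_mem _ h1, Finset.mem_image_of_mem _ h2⟩,
      ((expGraph_adj n A).mp hadj).2⟩
  · intro p _ q _ hpq
    have h1 := congrArg Prod.fst hpq
    have h2 := congrArg Prod.snd hpq
    simp only at h1 h2
    exact Prod.ext (lab_injective n h1) (lab_injective n h2)

lemma vol_le (S : Finset (Fin n)) : graphVol (expGraph n A) S ≤ A.card * S.card := by
  rw [graphVol_eq]
  calc ∑ v ∈ S, (expGraph n A).degree v ≤ ∑ _v ∈ S, A.card :=
        Finset.sum_le_sum (fun v _ => degree_le n A v)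
    _ = A.card * S.card := by rw [Finset.sum_const, smul_eq_mul, mul_comm]

lemma vol_ge (S : Finset (Fin n)) : (A.card - 1) * S.card ≤ graphVol (expGraph n A) S := by
  rw [graphVol_eq]
  calc (A.card - 1) * S.card = ∑ _v ∈ S, (A.card - 1) := by
        rw [Finset.sum_const, smul_eq_mul, mul_comm]
    _ ≤ ∑ v ∈ S, (expGraph n A).degree v := Finset.sum_le_sum (fun v _ => degree_ge n A v)

lemma nonempty_of_vol (S : Finset (Fin n)) (h : graphVol (expGraph n A) S ≠ 0) :
    S.Nonempty := by
  rcases S.eq_empty_or_nonempty with rfl | hne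
  · exact absurd (by rw [graphVol, Finset.sum_empty]) h
  · exact hne

/-- main one-sided expansion estimate -/
lemma expansion_half (S : Finset (Fin n)) {ε δ : ℝ} (hε : 0 ≤ ε) (hδ0 : 0 < δ)
    (hL2 : 2 ≤ A.card)
    (hbias : ∀ t : ZMod n, t ≠ 0 → Complex.abs (∑ s ∈ A, ec (t * s)) ≤ ε * A.card)
    (hcond : δ + ε + 1 / A.card ≤ 1 / 2)
    (hSne : S.Nonempty) (hhalf : 2 * S.card ≤ n) :
    δ * (graphVol (expGraph n A) S : ℝ) ≤ (edgeBoundary (expGraph n A) S : ℝ) := by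
  classical
  set L := A.card with hL
  have hn0 : 0 < n := Nat.pos_of_ne_zero (NeZero.ne n)
  have hnR : (0:ℝ) < n := by exact_mod_cast hn0
  have hLR : (0:ℝ) < L := by
    have : 0 < L := by omega
    exact_mod_cast this
  have hSR : (0:ℝ) < S.card := by exact_mod_cast Finset.card_pos.mpr hSne
  have hdec : (graphVol (expGraph n A) S : ℕ)
      = (IS (A := A) S).card + (FS (A := A) S).card := by
    rw [graphVol_eq, ← PS_card, PS_split]
  have himage : (S.image (lab n)).card = S.card :=
    Finset.card_image_of_injective _ (lab_injective n)
  have hIS : ((IS (A := A) S).card : ℝ) ≤ (L : ℝ) * S.card ^ 2 / n + ε * L * S.card := by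
    have h1 := IS_card_le (A := A) S
    have h2 := count_pairs_bound A (S.image (lab n)) hε hbias
    rw [himage] at h2
    have h3 : ((IS (A := A) S).card : ℝ) * n ≤ (L : ℝ) * S.card ^ 2 + ε * L * (n * S.card) := by
      calc ((IS (A := A) S).card : ℝ) * n
          ≤ (((NS (A := A) (S.image (lab n))).card : ℝ)) * n := by
            apply mul_le_mul_of_nonneg_right _ hnR.le
            exact_mod_cast h1
        _ ≤ (L : ℝ) * S.card ^ 2 + ε * L * (n * S.card) := h2
    rw [div_add' _ _ _ hnR.ne']
    rw [le_div_iff₀ hnR]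
    calc ((IS (A := A) S).card : ℝ) * n ≤ (L : ℝ) * S.card ^ 2 + ε * L * (n * S.card) := h3
      _ = ((L:ℝ) * S.card ^ 2 + ε * L * S.card * n) := by ring
  have hvolup : (graphVol (expGraph n A) S : ℝ) ≤ (L : ℝ) * S.card := by
    exact_mod_cast vol_le (A := A) S
  have hvoldown : ((L : ℝ) - 1) * S.card ≤ (graphVol (expGraph n A) S : ℝ) := by
    have := vol_ge (A := A) S
    have hc : (((L - 1) * S.card : ℕ) : ℝ) = ((L:ℝ) - 1) * S.card := by
      push_cast [Nat.cast_sub (by omega : 1 ≤ L)]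
      ring
    rw [← hc]
    exact_mod_cast this
  have hbd : ((edgeBoundary (expGraph n A) S : ℕ) : ℝ)
      = (graphVol (expGraph n A) S : ℝ) - ((IS (A := A) S).card : ℝ) := by
    rw [edgeBoundary_eq, hdec]
    push_cast
    ring
  have hhalfR : (S.card : ℝ) ≤ (n : ℝ) / 2 := by
    have : (2 * S.card : ℝ) ≤ n := by exact_mod_cast hhalf
    linarith
  have hsq : (L : ℝ) * S.card ^ 2 / n ≤ (L : ℝ) * S.card / 2 := by
    rw [div_le_div_iff₀ hnR (by norm_num : (0:ℝ) < 2)]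
    have h4 : (S.card : ℝ) * 2 ≤ n := by linarith
    calc (L : ℝ) * S.card ^ 2 * 2 = (L:ℝ) * S.card * (S.card * 2) := by ring
      _ ≤ (L:ℝ) * S.card * n := by
          apply mul_le_mul_of_nonneg_left h4
          positivity
  have hdelta : δ ≤ 1/2 - ε - 1/L := by linarith
  rw [hbd]
  have key : δ * ((L:ℝ) * S.card) ≤ ((L:ℝ) - 1) * S.card
      - ((L:ℝ) * S.card / 2 + ε * L * S.card) := by
    have expand : ((L:ℝ) - 1) * S.card - ((L:ℝ) * S.card / 2 + ε * L * S.card)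
        = ((1 - 1/L - 1/2 - ε) * ((L:ℝ) * S.card)) := by
      field_simp
      ring
    rw [expand]
    apply mul_le_mul_of_nonneg_right _ (by positivity)
    linarith
  calc δ * (graphVol (expGraph n A) S : ℝ) ≤ δ * ((L:ℝ) * S.card) := by
        apply mul_le_mul_of_nonneg_left hvolup hδ0.le
    _ ≤ ((L:ℝ) - 1) * S.card - ((L:ℝ) * S.card / 2 + ε * L * S.card) := key
    _ ≤ (graphVol (expGraph n A) S : ℝ) - ((IS (A := A) S).card : ℝ) := by
        have h5 : ((IS (A := A) S).card : ℝ) ≤ (L : ℝ) * S.card / 2 + ε * L * S.card := by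
          calc ((IS (A := A) S).card : ℝ) ≤ (L : ℝ) * S.card ^ 2 / n + ε * L * S.card := hIS
            _ ≤ (L : ℝ) * S.card / 2 + ε * L * S.card := by linarith
        linarith

lemma isEdgeExpander_expGraph {ε δ : ℝ} (hε : 0 ≤ ε) (hδ0 : 0 < δ)
    (hL2 : 2 ≤ A.card)
    (hbias : ∀ t : ZMod n, t ≠ 0 → Complex.abs (∑ s ∈ A, ec (t * s)) ≤ ε * A.card)
    (hcond : δ + ε + 1 / A.card ≤ 1 / 2) :
    IsEdgeExpander (expGraph n A) δ := by
  classical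
  intro S hS hSc
  have hSne := nonempty_of_vol (A := A) S hS
  have hScne := nonempty_of_vol (A := A) Sᶜ hSc
  have hccard : Sᶜ.card = n - S.card := by
    rw [Finset.card_compl, Fintype.card_fin]
  by_cases hhalf : 2 * S.card ≤ n
  · have h := expansion_half (A := A) S hε hδ0 hL2 hbias hcond hSne hhalf
    have hmin : ((min (graphVol (expGraph n A) S) (graphVol (expGraph n A) Sᶜ) : ℕ) : ℝ)
        ≤ (graphVol (expGraph n A) S : ℝ) := by
      exact_mod_cast min_le_left _ _
    calc δ * ((min (graphVol (expGraph n A) S) (graphVol (expGraph n A) Sᶜ) : ℕ) : ℝ)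
        ≤ δ * (graphVol (expGraph n A) S : ℝ) := mul_le_mul_of_nonneg_left hmin hδ0.le
      _ ≤ _ := h
  · have hle : S.card ≤ n := by
      have h := Finset.card_le_univ S
      simpa [Finset.card_univ] using h
    have hScard : S.card + Sᶜ.card = n := by
      rw [hccard]
      omega
    have hhalfc : 2 * Sᶜ.card ≤ n := by omega
    have h := expansion_half (A := A) Sᶜ hε hδ0 hL2 hbias hcond hScne hhalfc
    have hswap : (edgeBoundary (expGraph n A) Sᶜ : ℝ) = (edgeBoundary (expGraph n A) S : ℝ) := by
      rw [edgeBoundary_eq, edgeBoundary_eq, FS_compl_card]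
    have hmin : ((min (graphVol (expGraph n A) S) (graphVol (expGraph n A) Sᶜ) : ℕ) : ℝ)
        ≤ (graphVol (expGraph n A) Sᶜ : ℝ) := by
      exact_mod_cast min_le_right _ _
    calc δ * ((min (graphVol (expGraph n A) S) (graphVol (expGraph n A) Sᶜ) : ℕ) : ℝ)
        ≤ δ * (graphVol (expGraph n A) Sᶜ : ℝ) := mul_le_mul_of_nonneg_left hmin hδ0.le
      _ ≤ (edgeBoundary (expGraph n A) Sᶜ : ℝ) := h
      _ = (edgeBoundary (expGraph n A) S : ℝ) := hswap

lemma no_isolated (hL2 : 2 ≤ A.card) (v : Fin n) : ∃ w, (expGraph n A).Adj v w := by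
  rw [← SimpleGraph.degree_pos_iff_exists_adj]
  have := degree_ge n A v
  omega

lemma sumset_bound (hn0 : 0 < n) :
    ({x : ℤ | ∃ u v : Fin n, (expGraph n A).Adj u v ∧
        x = ((u : ℕ) + 1 : ℤ) + ((v : ℕ) + 1 : ℤ)}.ncard : ℝ) ≤ 2 * A.card := by
  classical
  set SS := {x : ℤ | ∃ u v : Fin n, (expGraph n A).Adj u v ∧
      x = ((u : ℕ) + 1 : ℤ) + ((v : ℕ) + 1 : ℤ)} with hSS
  set f : ℤ → ZMod n × Bool := fun x => ((x : ZMod n), decide (x ≤ n + 1)) with hf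
  have hbounds : ∀ x ∈ SS, 2 ≤ x ∧ x ≤ 2 * n := by
    intro x hx
    obtain ⟨u, v, hadj, rfl⟩ := hx
    have hu := u.isLt
    have hv := v.isLt
    omega
  have hres : ∀ x ∈ SS, (x : ZMod n) ∈ A := by
    intro x hx
    obtain ⟨u, v, hadj, rfl⟩ := hx
    have := ((expGraph_adj n A).mp hadj).2
    rw [lab, lab] at this
    convert this using 2
    push_cast
    ring
  have hinj : Set.InjOn f SS := by
    intro x hx y hy hxy
    have h1 := congrArg Prod.fst hxy
    have h2 := congrArg Prod.snd hxy
    simp only [hf] at h1 h2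
    have hdvd : (n : ℤ) ∣ (x - y) := by
      rw [← ZMod.intCast_zmod_eq_zero_iff_dvd]
      push_cast
      rw [h1]
      ring
    have hbx := hbounds x hx
    have hby := hbounds y hy
    have hb : decide (x ≤ n + 1) = decide (y ≤ n + 1) := h2
    have habs : |x - y| < n := by
      rcases Bool.eq_false_or_eq_true (decide (x ≤ (n:ℤ) + 1)) with hcase | hcase
      · rw [hcase] at hb
        have hxn : x ≤ (n:ℤ) + 1 := of_decide_eq_true hcase
        have hyn : y ≤ (n:ℤ) + 1 := of_decide_eq_true hb.symm
        rw [abs_lt]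
        omega
      · rw [hcase] at hb
        have hxn : ¬ (x ≤ (n:ℤ) + 1) := of_decide_eq_false hcase
        have hyn : ¬ (y ≤ (n:ℤ) + 1) := of_decide_eq_false hb.symm
        rw [abs_lt]
        omega

    have := Int.eq_zero_of_abs_lt_dvd hdvd habs
    omega
  have hfin : SS.Finite := by
    apply Set.Finite.subset (Set.finite_Icc (2 : ℤ) (2 * n))
    intro x hx
    rw [Set.mem_Icc]
    exact hbounds x hx
  have himg : (f '' SS) ⊆ ↑(A ×ˢ (Finset.univ : Finset Bool)) := by
    rintro _ ⟨x, hx, rfl⟩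
    rw [Finset.coe_product]
    exact Set.mem_prod.mpr ⟨Finset.mem_coe.mpr (hres x hx),
      Finset.mem_coe.mpr (Finset.mem_univ _)⟩
  have h1 : SS.ncard = (f '' SS).ncard := (Set.ncard_image_of_injOn hinj).symm
  have h2 : (f '' SS).ncard ≤ (A ×ˢ (Finset.univ : Finset Bool)).card := by
    rw [← Set.ncard_coe_finset]
    exact Set.ncard_le_ncard himg (Finset.finite_toSet _)
  have h3 : (A ×ˢ (Finset.univ : Finset Bool)).card = A.card * 2 := by
    rw [Finset.card_product, Finset.card_univ, Fintype.card_bool]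
  have h4 : SS.ncard ≤ A.card * 2 := by omega
  calc (SS.ncard : ℝ) ≤ (A.card * 2 : ℕ) := by exact_mod_cast h4
    _ = 2 * A.card := by push_cast; ring


end Graph


section Glue

open Filter

/-- asymptotic condition: eventually `2 * (a * log x + b)^2 + 1 ≤ x`. -/
lemma eventually_poly_log (a b : ℝ) :
    ∀ᶠ m : ℕ in atTop, 2 * (a * Real.log (m : ℝ) + b) ^ 2 + 1 ≤ (m : ℝ) := by
  have h2 : Tendsto (fun x : ℝ => Real.log x ^ 2 / x) atTop (nhds 0) := by
    have := Real.tendsto_pow_log_div_mul_add_atTop 1 0 2 one_ne_zero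
    simpa using this
  have h1 : Tendsto (fun x : ℝ => Real.log x ^ 1 / x) atTop (nhds 0) := by
    have := Real.tendsto_pow_log_div_mul_add_atTop 1 0 1 one_ne_zero
    simpa using this
  have h0 : Tendsto (fun x : ℝ => 1 / x) atTop (nhds 0) := by
    simpa using tendsto_inv_atTop_zero (𝕜 := ℝ)
  have hcomb : Tendsto (fun x : ℝ =>
      2 * a ^ 2 * (Real.log x ^ 2 / x) + 4 * a * b * (Real.log x ^ 1 / x)
        + (2 * b ^ 2 + 1) * (1 / x)) atTop (nhds 0) := by
    have := ((h2.const_mul (2 * a ^ 2)).add (h1.const_mul (4 * a * b))).add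
      (h0.const_mul (2 * b ^ 2 + 1))
    simpa using this
  have heq : (fun x : ℝ => (2 * (a * Real.log x + b) ^ 2 + 1) / x) =ᶠ[atTop]
      (fun x : ℝ => 2 * a ^ 2 * (Real.log x ^ 2 / x) + 4 * a * b * (Real.log x ^ 1 / x)
        + (2 * b ^ 2 + 1) * (1 / x)) := by
    filter_upwards [eventually_ge_atTop (1 : ℝ)] with x hx
    have hx0 : x ≠ 0 := by linarith
    field_simp
    ring
  have hfin : Tendsto (fun x : ℝ => (2 * (a * Real.log x + b) ^ 2 + 1) / x)
      atTop (nhds 0) := hcomb.congr' heq.symm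
  have hev : ∀ᶠ x : ℝ in atTop, (2 * (a * Real.log x + b) ^ 2 + 1) / x < 1 :=
    hfin.eventually (gt_mem_nhds one_pos)
  have hev2 : ∀ᶠ x : ℝ in atTop, 2 * (a * Real.log x + b) ^ 2 + 1 ≤ x := by
    filter_upwards [hev, eventually_ge_atTop (1 : ℝ)] with x hx hx1
    have hx0 : (0:ℝ) < x := by linarith
    have := (div_lt_one hx0).mp hx
    linarith
  exact tendsto_natCast_atTop_atTop.eventually hev2

theorem main_expander (δ : ℝ) (hδ0 : 0 < δ) (hδ : δ < 1 / 2) :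
    ∃ (C : ℝ) (n₀ : ℕ), 0 < C ∧ ∀ n : ℕ, n₀ ≤ n →
      ∃ G : SimpleGraph (Fin n),
        (∀ v : Fin n, ∃ w, G.Adj v w) ∧ IsEdgeExpander G δ ∧
        ({x : ℤ | ∃ u v : Fin n, G.Adj u v ∧
            x = ((u : ℕ) + 1 : ℤ) + ((v : ℕ) + 1 : ℤ)}.ncard : ℝ) ≤ C * Real.log n := by
  classical
  set ε : ℝ := (1 / 2 - δ) / 2 with hεdef
  have hε0 : 0 < ε := by rw [hεdef]; linarith
  have hε1 : ε ≤ 1 := by rw [hεdef]; linarith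
  set a : ℝ := 16 / ε ^ 2 with hadef
  have ha0 : 0 < a := by positivity
  set b : ℝ := a * Real.log 8 + 1 / ε + 4 with hbdef
  have hlog8 : (1:ℝ) ≤ Real.log 8 := by
    rw [Real.le_log_iff_exp_le (by norm_num : (0:ℝ) < 8)]
    calc Real.exp 1 ≤ 2.7182818286 := Real.exp_one_lt_d9.le
      _ ≤ 8 := by norm_num
  have hb0 : 0 < b := by
    have h1 : 0 < a * Real.log 8 := mul_pos ha0 (by linarith)
    have h2 : 0 < 1 / ε := by positivity
    rw [hbdef]
    positivity
  set Lf : ℕ → ℕ := fun m => ⌈a * Real.log (8 * m)⌉₊ + ⌈1 / ε⌉₊ + 2 with hLf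
  set C : ℝ := 2 * (2 * a + 1 / ε + 4) with hCdef
  have hC0 : 0 < C := by rw [hCdef]; positivity
  have hLup : ∀ m : ℕ, 1 ≤ m → (Lf m : ℝ) ≤ a * Real.log m + b := by
    intro m hm
    have hm0 : (0:ℝ) < m := by exact_mod_cast hm
    have hlog : Real.log (8 * m) = Real.log 8 + Real.log m := by
      rw [Real.log_mul (by norm_num) (by positivity)]
    have hceil1 : (⌈a * Real.log (8 * m)⌉₊ : ℝ) ≤ a * Real.log (8 * m) + 1 := by
      have hnn : 0 ≤ a * Real.log (8 * m) := by
        apply mul_nonneg ha0.le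
        apply Real.log_nonneg
        have h0 : (1:ℝ) ≤ m := by exact_mod_cast hm
        nlinarith
      exact (Nat.ceil_lt_add_one hnn).le
    have hceil2 : (⌈1 / ε⌉₊ : ℝ) ≤ 1 / ε + 1 := (Nat.ceil_lt_add_one (by positivity)).le
    have hLcast : (Lf m : ℝ) = (⌈a * Real.log (8 * m)⌉₊ : ℝ) + (⌈1 / ε⌉₊ : ℝ) + 2 := by
      rw [hLf]; push_cast; ring
    rw [hLcast, hlog] at *
    rw [hbdef]
    linarith
  have hev := eventually_poly_log a b
  rw [eventually_atTop] at hev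
  obtain ⟨n₁, hn₁⟩ := hev
  set n₀ : ℕ := max n₁ 8 with hn₀def
  refine ⟨C, n₀, hC0, ?_⟩
  intro n hn
  have hn8 : 8 ≤ n := le_trans (le_max_right _ _) hn
  have hn1 : 1 ≤ n := by omega
  haveI : NeZero n := ⟨by omega⟩
  have hnR0 : (0:ℝ) < n := by exact_mod_cast (by omega : 0 < n)
  set L : ℕ := Lf n with hLdef
  have hL2 : 2 ≤ L := by simp only [hLdef, hLf]; omega
  have hL1 : 1 ≤ L := by omega
  have hLlow : a * Real.log (8 * n) ≤ (L : ℝ) := by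
    simp only [hLdef, hLf]
    push_cast
    have h1 := Nat.le_ceil (a * Real.log (8 * n))
    have h2 : (0:ℝ) ≤ (⌈1 / ε⌉₊ : ℝ) := by positivity
    linarith
  have hLeps : 1 / ε ≤ (L : ℝ) := by
    simp only [hLdef, hLf]
    push_cast
    have h1 := Nat.le_ceil (1 / ε)
    have h2 : (0:ℝ) ≤ (⌈a * Real.log (8 * n)⌉₊ : ℝ) := by positivity
    linarith
  have hch : 4 * (n:ℝ) * Real.exp (-(ε ^ 2 * L) / 16) ≤ 1 / 2 := by
    have h8n : (0:ℝ) < 8 * n := by positivity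
    have hstep : Real.log (8 * n) ≤ ε ^ 2 * L / 16 := by
      have h1 : a * Real.log (8 * n) ≤ (L:ℝ) := hLlow
      have h2 : Real.log (8 * n) = (ε ^ 2 / 16) * (a * Real.log (8 * n)) := by
        rw [hadef]
        field_simp
      rw [h2]
      calc (ε ^ 2 / 16) * (a * Real.log (8 * n)) ≤ (ε ^ 2 / 16) * L := by
            apply mul_le_mul_of_nonneg_left h1 (by positivity)
        _ = ε ^ 2 * L / 16 := by ring
    have hexp : Real.exp (-(ε ^ 2 * L) / 16) ≤ 1 / (8 * n) := by
      have h3 : Real.exp (-(ε ^ 2 * L) / 16) ≤ Real.exp (-Real.log (8 * n)) := by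
        apply Real.exp_le_exp.mpr
        have h4 : (-(ε ^ 2 * L)) / 16 = -(ε ^ 2 * L / 16) := by ring
        rw [h4]
        linarith
      rw [Real.exp_neg, Real.exp_log h8n] at h3
      rw [one_div]
      exact h3
    calc 4 * (n:ℝ) * Real.exp (-(ε ^ 2 * L) / 16) ≤ 4 * (n:ℝ) * (1 / (8 * n)) := by
          apply mul_le_mul_of_nonneg_left hexp (by positivity)
      _ = 1 / 2 := by field_simp; ring
  have hcol : 2 * L ^ 2 ≤ n := by
    have h := hn₁ n (le_trans (le_max_left _ _) hn)
    have hLb := hLup n hn1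
    have hLR : (0:ℝ) ≤ (L:ℝ) := by positivity
    have hrhs : (0:ℝ) ≤ a * Real.log n + b := by
      have h5 : (0:ℝ) ≤ a * Real.log n := by
        apply mul_nonneg ha0.le
        apply Real.log_nonneg
        exact_mod_cast hn1
      linarith
    have hreal : 2 * (L:ℝ) ^ 2 ≤ n := by
      have hsq : (L:ℝ) ^ 2 ≤ (a * Real.log n + b) ^ 2 := by
        apply pow_le_pow_left₀ hLR hLb
      nlinarith
    exact_mod_cast hreal
  obtain ⟨A, hAcard, hAbias⟩ := exists_good L hL1 hε0 hε1 hch hcol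
  refine ⟨expGraph n A, ?_, ?_, ?_⟩
  · exact no_isolated (A := A) (by omega)
  · apply isEdgeExpander_expGraph (A := A) hε0.le hδ0 (by rw [hAcard]; exact hL2)
    · intro t ht
      rw [hAcard]
      exact hAbias t ht
    · rw [hAcard]
      have hinv : 1 / (L:ℝ) ≤ ε := by
        rw [div_le_iff₀ (by positivity : (0:ℝ) < (L:ℝ))]
        calc (1:ℝ) = ε * (1 / ε) := by field_simp
          _ ≤ ε * L := mul_le_mul_of_nonneg_left hLeps hε0.le
      rw [hεdef] at *
      linarith
  · have hsum := sumset_bound (A := A) (by omega)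
    have h2L : (2:ℝ) * A.card ≤ C * Real.log n := by
      rw [hAcard]
      have hlogn : (1:ℝ) ≤ Real.log n := by
        calc (1:ℝ) ≤ Real.log 8 := hlog8
          _ ≤ Real.log n := by
            apply Real.log_le_log (by norm_num)
            exact_mod_cast hn8
      have hLb := hLup n hn1
      have hblog : b ≤ (a + 1 / ε + 4) * Real.log n := by
        rw [hbdef]
        have h1 : a * Real.log 8 ≤ a * Real.log n := by
          apply mul_le_mul_of_nonneg_left _ ha0.le
          apply Real.log_le_log (by norm_num)
          exact_mod_cast hn8
        have h2 : 1 / ε + 4 ≤ (1 / ε + 4) * Real.log n := by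
          have hpos : (0:ℝ) ≤ 1 / ε + 4 := by positivity
          nlinarith [mul_nonneg hpos (by linarith : (0:ℝ) ≤ Real.log n - 1)]
        nlinarith
      have hLC : (L : ℝ) ≤ (2 * a + 1 / ε + 4) * Real.log n := by
        calc (L : ℝ) ≤ a * Real.log n + b := hLb
          _ ≤ a * Real.log n + (a + 1 / ε + 4) * Real.log n := by linarith
          _ = (2 * a + 1 / ε + 4) * Real.log n := by ring
      calc (2:ℝ) * L ≤ 2 * ((2 * a + 1 / ε + 4) * Real.log n) := by linarith
        _ = C * Real.log n := by rw [hCdef]; ring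
    calc ({x : ℤ | ∃ u v : Fin n, (expGraph n A).Adj u v ∧
            x = ((u : ℕ) + 1 : ℤ) + ((v : ℕ) + 1 : ℤ)}.ncard : ℝ)
        ≤ 2 * A.card := hsum
      _ ≤ C * Real.log n := h2L

end Glue


end Expander18


end AuxiliaryDevelopment

/-- For every `δ ∈ (0, 1/2)` there are `C > 0` and `n₀` such that for
every `n ≥ n₀` there is a `δ`-edge-expander with no isolated vertices on the vertex set
`{1, 2, …, n}` (modelled as `Fin n`, vertex `i` carrying the integer label `i + 1`) whose
sum-set `{u + v : uv ∈ E(G)} ⊆ ℤ` has at most `C·log n` elements. -/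
theorem expander_with_small_sumset (δ : ℝ) (hδ0 : 0 < δ) (hδ : δ < 1 / 2) :
    ∃ (C : ℝ) (n₀ : ℕ), 0 < C ∧ ∀ n : ℕ, n₀ ≤ n →
      ∃ G : SimpleGraph (Fin n),
        (∀ v : Fin n, ∃ w, G.Adj v w) ∧ IsEdgeExpander G δ ∧
        ({x : ℤ | ∃ u v : Fin n, G.Adj u v ∧
            x = ((u : ℕ) + 1 : ℤ) + ((v : ℕ) + 1 : ℤ)}.ncard : ℝ) ≤ C * Real.log n := by
  exact Expander18.main_expander δ hδ0 hδ
end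

section
/- For every integer n ≥ 2 and every integer d with 1 ≤ d ≤ n^{2/3}, there exists a subset T of ℤ/nℤ of cardinality d such that for every complex number ω with ω^n = 1 and ω ≠ 1, one has |Σ_{s ∈ T} ω^{s̃}| ≤ 3·√d·√(log(10n)), where s̃ ∈ {0,…,n-1} is the representative of s and log denotes the natural logarithm. -/
open Finset Real



lemma zmod_sum_val {n : ℕ} [NeZero n] {M : Type*} [AddCommMonoid M] (f : ℕ → M) :
    ∑ s : ZMod n, f s.val = ∑ j ∈ Finset.range n, f j := by
  refine Finset.sum_nbij' (fun s => s.val) (fun j => (j : ZMod n)) ?_ ?_ ?_ ?_ ?_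
  · intro a _; exact Finset.mem_range.mpr (ZMod.val_lt a)
  · intro a _; exact Finset.mem_univ _
  · intro a _; exact ZMod.natCast_zmod_val a
  · intro a ha; exact ZMod.val_cast_of_lt (Finset.mem_range.mp ha)
  · intro a _; rfl

lemma full_sum_zero {n : ℕ} [NeZero n] {x : ℂ} (hx : x ^ n = 1) (hx1 : x ≠ 1) :
    ∑ s : ZMod n, x ^ s.val = 0 := by
  rw [zmod_sum_val (fun j => x ^ j), geom_sum_eq hx1, hx, sub_self, zero_div]

lemma sum_union_le' {α : Type*} [DecidableEq α] (s t : Finset α) (f : α → ℝ)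
    (hf : ∀ a, 0 ≤ f a) : ∑ a ∈ s ∪ t, f a ≤ ∑ a ∈ s, f a + ∑ a ∈ t, f a := by
  rw [show s ∪ t = s ∪ (t \ s) by rw [Finset.union_sdiff_self_eq_union],
    Finset.sum_union Finset.disjoint_sdiff]
  have : ∑ a ∈ t \ s, f a ≤ ∑ a ∈ t, f a :=
    Finset.sum_le_sum_of_subset_of_nonneg (Finset.sdiff_subset) (fun a _ _ => hf a)
  linarith

lemma sum_biUnion_le' {ι α : Type*} [DecidableEq α] (I : Finset ι) (B : ι → Finset α)
    (f : α → ℝ) (hf : ∀ a, 0 ≤ f a) :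
    ∑ a ∈ I.biUnion B, f a ≤ ∑ i ∈ I, ∑ a ∈ B i, f a := by
  classical
  induction I using Finset.induction with
  | empty => simp
  | insert _ _ hi ih =>
      rename_i i I
      rw [Finset.biUnion_insert, Finset.sum_insert hi]
      calc ∑ a ∈ B i ∪ I.biUnion B, f a
          ≤ ∑ a ∈ B i, f a + ∑ a ∈ I.biUnion B, f a := sum_union_le' _ _ _ hf
        _ ≤ _ := by linarith [ih]


-- pointwise factor bound
lemma factor_bound {p q x : ℝ} (hp : 0 ≤ p) (hpq : p + q = 1) (hx : |x| ≤ 1) :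
    p * Real.exp x + q ≤ Real.exp (p * (x + (3/4) * x^2)) := by
  have h1 : Real.exp x - (1 + x) ≤ (3/4) * x^2 := by
    have := Real.exp_bound hx (n := 2) (by norm_num)
    have h2 : ∑ m ∈ Finset.range 2, x ^ m / m.factorial = 1 + x := by
      simp [Finset.sum_range_succ]
    rw [h2] at this
    have h3 : |x| ^ 2 = x ^ 2 := sq_abs x
    have h4 := (abs_le.mp this).2
    rw [h3] at h4
    norm_num at h4 ⊢
    linarith
  have h5 : p * Real.exp x + q = 1 + p * (Real.exp x - 1) := by ring_nf; linarith
  have h6 : p * (Real.exp x - 1) ≤ p * (x + (3/4) * x^2) := by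
    apply mul_le_mul_of_nonneg_left _ hp
    linarith
  calc p * Real.exp x + q = 1 + p * (Real.exp x - 1) := h5
    _ ≤ Real.exp (p * (Real.exp x - 1)) := Real.add_one_le_exp _ |>.trans_eq' (by ring)
    _ ≤ Real.exp (p * (x + (3/4) * x^2)) := Real.exp_le_exp.mpr h6

-- Chernoff bound over the Bernoulli(p) product "measure" on subsets
lemma chernoff_aux {α : Type*} [Fintype α] [DecidableEq α] (p q lam t : ℝ)
    (hp : 0 ≤ p) (hq : 0 ≤ q) (hpq : p + q = 1) (hlam : 0 ≤ lam)
    (c : α → ℝ) (hc : ∀ s, |lam * c s| ≤ 1) (hsum : ∑ s, c s = 0) :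
    ∑ T ∈ Finset.univ.powerset.filter (fun T => t ≤ ∑ s ∈ T, c s),
        p ^ T.card * q ^ (Fintype.card α - T.card)
      ≤ Real.exp ((3/4) * p * lam^2 * (∑ s, (c s)^2) - lam * t) := by
  classical
  set μ : Finset α → ℝ := fun T => p ^ T.card * q ^ (Fintype.card α - T.card) with hμ
  have hμ0 : ∀ T, 0 ≤ μ T := fun T => mul_nonneg (pow_nonneg hp _) (pow_nonneg hq _)
  -- step 1: insert exp factor
  have step1 : ∑ T ∈ Finset.univ.powerset.filter (fun T => t ≤ ∑ s ∈ T, c s), μ T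
      ≤ ∑ T ∈ Finset.univ.powerset, μ T * Real.exp (lam * ((∑ s ∈ T, c s) - t)) := by
    refine le_trans (Finset.sum_le_sum ?_) (Finset.sum_le_sum_of_subset_of_nonneg
      (Finset.filter_subset _ _) ?_)
    · intro T hT
      rw [Finset.mem_filter] at hT
      have hexp : (1:ℝ) ≤ Real.exp (lam * ((∑ s ∈ T, c s) - t)) := by
        rw [← Real.exp_zero]
        exact Real.exp_le_exp.mpr (mul_nonneg hlam (by linarith [hT.2]))
      nlinarith [hμ0 T]
    · intro T _ _
      exact mul_nonneg (hμ0 T) (Real.exp_pos _).le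
  -- step 2: factorize
  have step2 : ∑ T ∈ Finset.univ.powerset, μ T * Real.exp (lam * ((∑ s ∈ T, c s) - t))
      = Real.exp (-(lam * t)) * ∏ s, (p * Real.exp (lam * c s) + q) := by
    rw [Finset.prod_add]
    rw [Finset.mul_sum]
    apply Finset.sum_congr rfl
    intro T hT
    rw [Finset.mem_powerset] at hT
    have hcard : (Finset.univ \ T).card = Fintype.card α - T.card := by
      rw [Finset.card_sdiff_of_subset hT, Finset.card_univ]
    rw [Finset.prod_const, hcard]
    rw [Finset.prod_mul_distrib, Finset.prod_const]
    rw [← Real.exp_sum]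
    rw [mul_sub, Real.exp_sub, Finset.mul_sum]
    simp only [hμ, Real.exp_neg]
    field_simp
  -- step 3: bound the product
  have step3 : ∏ s, (p * Real.exp (lam * c s) + q)
      ≤ Real.exp ((3/4) * p * lam^2 * (∑ s, (c s)^2)) := by
    calc ∏ s, (p * Real.exp (lam * c s) + q)
        ≤ ∏ s, Real.exp (p * (lam * c s + (3/4) * (lam * c s)^2)) := by
          apply Finset.prod_le_prod
          · intro s _; positivity
          · intro s _; exact factor_bound hp hpq (hc s)
      _ = Real.exp (∑ s, p * (lam * c s + (3/4) * (lam * c s)^2)) := by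
          rw [Real.exp_sum]
      _ = Real.exp ((3/4) * p * lam^2 * (∑ s, (c s)^2)) := by
          congr 1
          have hterm : ∀ s:α, p * (lam * c s + 3 / 4 * (lam * c s) ^ 2)
            = p * lam * c s + (3/4) * p * lam^2 * (c s)^2 := fun s => by ring
          simp only [hterm]
          rw [Finset.sum_add_distrib, ← Finset.mul_sum, ← Finset.mul_sum, hsum, mul_zero, zero_add]
  calc _ ≤ _ := step1
    _ = _ := step2
    _ ≤ Real.exp (-(lam*t)) * Real.exp ((3/4) * p * lam^2 * (∑ s, (c s)^2)) := by
        apply mul_le_mul_of_nonneg_left step3 (Real.exp_pos _).le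
    _ = _ := by rw [← Real.exp_add]; ring_nf


lemma mode_aux (n d : ℕ) (hd : 0 < d) (hdn : d < n) :
    (1:ℝ)/(n+1) ≤ (n.choose d : ℝ) * ((d:ℝ)/n)^d * (((n:ℝ)-d)/n)^(n-d) := by
  have hn0 : (0:ℝ) < n := by
    have : 0 < n := lt_of_le_of_lt (Nat.zero_le d) hdn
    exact_mod_cast this
  set p : ℝ := (d:ℝ)/n with hp
  set q : ℝ := ((n:ℝ)-d)/n with hq
  have hp0 : 0 < p := by positivity
  have hq0 : 0 < q := by
    apply div_pos _ hn0
    have : (d:ℝ) < n := by exact_mod_cast hdn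
    linarith
  have hpq : p + q = 1 := by rw [hp, hq]; field_simp; ring
  set a : ℕ → ℝ := fun k => (n.choose k : ℝ) * p^k * q^(n-k) with ha
  have ha0 : ∀ k, 0 ≤ a k := fun k => by positivity
  have hpd : p * ((n:ℝ) - d) = q * d := by rw [hp, hq]; field_simp
  have ident : ∀ k, k < n → a (k+1) * ((k+1) * ((n:ℝ)-d)) = a k * (((n:ℝ)-k) * d) := by
    intro k hk
    have hcast : (n.choose (k+1) : ℝ) * (k+1) = (n.choose k : ℝ) * ((n:ℝ)-k) := by
      have := Nat.choose_succ_right_eq n k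
      have h2 : ((n.choose (k+1) * (k+1) : ℕ) : ℝ) = ((n.choose k * (n - k) : ℕ) : ℝ) := by
        exact_mod_cast congrArg (Nat.cast : ℕ → ℝ) this
      push_cast [Nat.cast_sub hk.le] at h2
      linarith
    have hqpow : q^(n-k) = q^(n-(k+1)) * q := by
      rw [← pow_succ]
      congr 1
      omega
    have hppow : p^(k+1) = p^k * p := pow_succ p k
    rw [ha]
    simp only
    rw [hqpow, hppow]
    calc (n.choose (k+1) : ℝ) * (p^k * p) * q^(n-(k+1)) * ((k+1) * ((n:ℝ)-d))
        = ((n.choose (k+1) : ℝ) * (k+1)) * p^k * q^(n-(k+1)) * (p * ((n:ℝ)-d)) := by ring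
      _ = ((n.choose k : ℝ) * ((n:ℝ)-k)) * p^k * q^(n-(k+1)) * (q * d) := by
          rw [hcast, hpd]
      _ = (n.choose k : ℝ) * p^k * (q^(n-(k+1)) * q) * (((n:ℝ)-k) * d) := by ring
  have up : ∀ k, k < d → a k ≤ a (k+1) := by
    intro k hk
    have hkn : k < n := hk.trans hdn
    have h1 : ((k:ℝ)+1) * ((n:ℝ)-d) ≤ ((n:ℝ)-k) * d := by
      have hc1 : ((k:ℝ)+1) ≤ d := by exact_mod_cast hk
      have hc2 : ((n:ℝ)-d) ≤ (n:ℝ)-k := by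
        have : (k:ℝ) ≤ d := by exact_mod_cast hk.le
        linarith
      have hc3 : (0:ℝ) ≤ (n:ℝ) - d := by
        have : (d:ℝ) ≤ n := by exact_mod_cast hdn.le
        linarith
      have hc4 : (0:ℝ) ≤ (k:ℝ)+1 := by positivity
      nlinarith
    have hpos : (0:ℝ) < ((k:ℝ)+1) * ((n:ℝ)-d) := by
      have h5 : (d:ℝ) < n := by exact_mod_cast hdn
      have h6 : (0:ℝ) ≤ (k:ℝ) := Nat.cast_nonneg k
      nlinarith
    have hident := ident k hkn
    nlinarith [mul_le_mul_of_nonneg_left h1 (ha0 k), hpos, hident]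
  have down : ∀ k, d ≤ k → k < n → a (k+1) ≤ a k := by
    intro k hk hkn
    have h1 : ((n:ℝ)-k) * d ≤ ((k:ℝ)+1) * ((n:ℝ)-d) := by
      have hc1 : (d:ℝ) ≤ (k:ℝ)+1 := by
        have : (d:ℝ) ≤ k := by exact_mod_cast hk
        linarith
      have hc2 : ((n:ℝ)-k) ≤ (n:ℝ)-d := by
        have : (d:ℝ) ≤ k := by exact_mod_cast hk
        linarith
      have hc3 : (0:ℝ) ≤ (n:ℝ) - k := by
        have : (k:ℝ) ≤ n := by exact_mod_cast hkn.le
        linarith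
      have hc4 : (0:ℝ) ≤ (d:ℝ) := by positivity
      nlinarith
    have hpos : (0:ℝ) < ((k:ℝ)+1) * ((n:ℝ)-d) := by
      have h5 : (d:ℝ) < n := by exact_mod_cast hdn
      have h6 : (0:ℝ) ≤ (k:ℝ) := Nat.cast_nonneg k
      nlinarith
    have hident := ident k hkn
    nlinarith [mul_le_mul_of_nonneg_left h1 (ha0 k), hpos, hident]
  have hmax : ∀ k ≤ n, a k ≤ a d := by
    intro k hk
    rcases le_or_gt k d with h | h
    · -- downward induction: a (d - j) ≤ a d
      have key : ∀ j, j ≤ d → a (d - j) ≤ a d := by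
        intro j
        induction j with
        | zero => simp
        | succ j ih =>
            intro hj
            have h1 : a (d - (j+1)) ≤ a (d - j) := by
              have : d - (j+1) < d := by omega
              have h2 := up (d - (j+1)) this
              have h3 : d - (j+1) + 1 = d - j := by omega
              rwa [h3] at h2
            exact h1.trans (ih (by omega))
      have : k = d - (d - k) := by omega
      rw [this]
      exact key (d - k) (by omega)
    · -- upward induction from d
      have key : ∀ m, d ≤ m → m ≤ n → a m ≤ a d := by
        intro m hm
        induction m, hm using Nat.le_induction with
        | base => intro _; exact le_rfl
        | succ m hdm ih =>
            intro hmn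
            exact (down m hdm (by omega)).trans (ih (by omega))
      exact key k h.le hk
  -- conclude
  have hsum1 : ∑ k ∈ Finset.range (n+1), a k = 1 := by
    have := add_pow p q n
    rw [hpq, one_pow] at this
    rw [this]
    apply Finset.sum_congr rfl
    intro k _
    rw [ha]
    ring
  have hle : (1:ℝ) ≤ (n+1) * a d := by
    calc (1:ℝ) = ∑ k ∈ Finset.range (n+1), a k := hsum1.symm
      _ ≤ ∑ _k ∈ Finset.range (n+1), a d := Finset.sum_le_sum (fun k hk =>
          hmax k (by simpa using Nat.lt_succ_iff.mp (Finset.mem_range.mp hk)))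
      _ = (n+1) * a d := by
          rw [Finset.sum_const, Finset.card_range]
          push_cast
          ring
  rw [div_le_iff₀ (by positivity)]
  calc (1:ℝ) ≤ (n+1) * a d := hle
    _ = a d * ((n:ℝ)+1) := by ring

lemma var_half {n : ℕ} [NeZero n] {ω : ℂ} (hω : ω ^ n = 1) (habs : ‖ω‖ = 1)
    (hω2 : ω^2 ≠ 1) :
    (∑ s : ZMod n, ((ω ^ s.val).re)^2 = (n:ℝ)/2) ∧
    (∑ s : ZMod n, ((ω ^ s.val).im)^2 = (n:ℝ)/2) := by
  have habs' : ∀ s : ZMod n, ((ω ^ s.val).re)^2 + ((ω ^ s.val).im)^2 = 1 := by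
    intro s
    have : ‖ω ^ s.val‖ = 1 := by rw [norm_pow, habs, one_pow]
    have h2 := Complex.sq_norm (ω ^ s.val)
    rw [this, Complex.normSq_apply] at h2
    nlinarith
  have hre2 : ∀ s : ZMod n, ((ω ^ s.val).re)^2
      = 1/2 + ((ω^2) ^ s.val).re / 2 := by
    intro s
    have hpow : (ω^2) ^ s.val = (ω ^ s.val) * (ω ^ s.val) := by
      rw [← pow_mul, mul_comm 2 s.val, pow_mul, sq]
    have hmul : ((ω ^ s.val) * (ω ^ s.val)).re
        = (ω ^ s.val).re * (ω ^ s.val).re - (ω ^ s.val).im * (ω ^ s.val).im :=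
      Complex.mul_re _ _
    rw [hpow, hmul]
    have := habs' s
    nlinarith
  have him2 : ∀ s : ZMod n, ((ω ^ s.val).im)^2
      = 1/2 - ((ω^2) ^ s.val).re / 2 := by
    intro s
    have := habs' s
    have := hre2 s
    linarith
  have hzero : ∑ s : ZMod n, ((ω^2) ^ s.val).re = 0 := by
    rw [← Complex.re_sum]
    rw [full_sum_zero (by rw [← pow_mul, mul_comm, pow_mul, hω, one_pow]) hω2]
    simp
  have hcard : (Finset.univ : Finset (ZMod n)).card = n := by
    rw [Finset.card_univ, ZMod.card]
  constructor
  · calc ∑ s : ZMod n, ((ω ^ s.val).re)^2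
        = ∑ s : ZMod n, (1/2 + ((ω^2) ^ s.val).re / 2) := Finset.sum_congr rfl (fun s _ => hre2 s)
      _ = (n:ℝ)/2 := by
          rw [Finset.sum_add_distrib, Finset.sum_const, hcard, ← Finset.sum_div, hzero]
          simp [nsmul_eq_mul]; ring
  · calc ∑ s : ZMod n, ((ω ^ s.val).im)^2
        = ∑ s : ZMod n, (1/2 - ((ω^2) ^ s.val).re / 2) := Finset.sum_congr rfl (fun s _ => him2 s)
      _ = (n:ℝ)/2 := by
          rw [Finset.sum_sub_distrib, Finset.sum_const, hcard, ← Finset.sum_div, hzero]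
          simp [nsmul_eq_mul]; ring

set_option maxHeartbeats 2000000 in
/-- For every `n ≥ 2` and every `d` with `1 ≤ d ≤ n^(2/3)`, there is a
subset `T ⊆ ℤ/nℤ` of cardinality `d` such that for every nontrivial `n`-th root of unity
`ω ∈ ℂ`, `|∑_{s ∈ T} ω^s̃| ≤ 3·√d·√(log(10n))`, where `s̃ ∈ {0,…,n-1}` is the canonical
representative of `s`. -/
theorem exists_flat_subset_zmod (n : ℕ) (hn : 2 ≤ n) (d : ℕ) (hd1 : 1 ≤ d)
    (hd2 : (d : ℝ) ≤ (n : ℝ) ^ ((2 : ℝ) / 3)) :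
    ∃ T : Finset (ZMod n), T.card = d ∧
      ∀ ω : ℂ, ω ^ n = 1 → ω ≠ 1 →
        ‖∑ s ∈ T, ω ^ (s.val)‖ ≤
          3 * Real.sqrt d * Real.sqrt (Real.log (10 * n)) := by
  classical
  haveI : NeZero n := ⟨by omega⟩
  set L : ℝ := Real.log (10 * n) with hL
  have hn1 : (1:ℝ) < n := by exact_mod_cast hn.trans_lt' one_lt_two
  have h16 : (16:ℝ) ≤ 10 * n := by
    have : (2:ℝ) ≤ n := by exact_mod_cast hn
    linarith
  have hL16 : Real.log 16 ≤ L := Real.log_le_log (by norm_num) h16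
  have hL0 : 0 < L := lt_of_lt_of_le (Real.log_pos (by norm_num)) hL16
  have hdn : d < n := by
    have h1 : (n:ℝ) ^ ((2:ℝ)/3) < (n:ℝ) ^ (1:ℝ) :=
      Real.rpow_lt_rpow_of_exponent_lt hn1 (by norm_num)
    rw [Real.rpow_one] at h1
    exact_mod_cast hd2.trans_lt h1
  by_cases hsmall : (d:ℝ) ≤ 9 * L
  · -- trivial case
    set T0 : Finset (ZMod n) := (Finset.range d).image (Nat.cast : ℕ → ZMod n) with hT0
    refine ⟨T0, ?_, ?_⟩
    · rw [hT0, Finset.card_image_of_injOn, Finset.card_range]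
      intro a ha b hb hab
      have ha' : a < n := (Finset.mem_range.mp ha).trans_le hdn.le
      have hb' : b < n := (Finset.mem_range.mp hb).trans_le hdn.le
      have := congrArg ZMod.val hab
      rwa [ZMod.val_cast_of_lt ha', ZMod.val_cast_of_lt hb'] at this
    · intro ω hω hω1
      have habs1 : ∀ s : ZMod n, ‖ω ^ s.val‖ = 1 := by
        intro s
        rw [norm_pow,
          Complex.norm_eq_one_of_pow_eq_one hω (by omega), one_pow]
      calc ‖∑ s ∈ T0, ω ^ s.val‖
          ≤ ∑ s ∈ T0, ‖ω ^ s.val‖ :=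
            norm_sum_le _ _
        _ ≤ ∑ _s ∈ T0, (1:ℝ) :=
            Finset.sum_le_sum (fun s _ => (habs1 s).le)
        _ ≤ (d:ℝ) := by
            rw [Finset.sum_const, nsmul_eq_mul, mul_one]
            have : T0.card ≤ d := by
              rw [hT0]
              exact Finset.card_image_le.trans (by rw [Finset.card_range])
            exact_mod_cast this
        _ ≤ 3 * Real.sqrt d * Real.sqrt L := by
            have h1 : Real.sqrt d ≤ Real.sqrt (9 * L) := Real.sqrt_le_sqrt hsmall
            have h2 : Real.sqrt (9 * L) = 3 * Real.sqrt L := by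
              rw [Real.sqrt_mul (by norm_num) L,
                show (9:ℝ) = 3^2 by norm_num, Real.sqrt_sq (by norm_num : (0:ℝ) ≤ 3)]
            have h3 : (d:ℝ) = Real.sqrt d * Real.sqrt d := by
              rw [Real.mul_self_sqrt (by positivity)]
            have h4 : Real.sqrt d ≤ 3 * Real.sqrt L := by rw [← h2]; exact h1
            calc (d:ℝ) = Real.sqrt d * Real.sqrt d := h3
              _ ≤ Real.sqrt d * (3 * Real.sqrt L) :=
                  mul_le_mul_of_nonneg_left h4 (Real.sqrt_nonneg _)
              _ = 3 * Real.sqrt d * Real.sqrt L := by ring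
  · -- main probabilistic case
    push_neg at hsmall
    have hd0 : (0:ℝ) < d := by positivity
    have hdne : (d:ℝ) ≠ 0 := ne_of_gt hd0
    have hn0 : (0:ℝ) < n := by positivity
    have hdnR : (d:ℝ) < n := by exact_mod_cast hdn
    set t : ℝ := 3 * Real.sqrt d * Real.sqrt L / Real.sqrt 2 with ht
    set lam : ℝ := 7 * t / (10 * d) with hlamdef
    have ht0 : 0 ≤ t := by positivity
    have hkey : t^2 = 9 * d * L / 2 := by
      rw [ht, div_pow, mul_pow, mul_pow,
        Real.sq_sqrt hd0.le, Real.sq_sqrt hL0.le, Real.sq_sqrt (by norm_num : (0:ℝ) ≤ 2)]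
      ring
    have hlam0 : 0 ≤ lam := by positivity
    have e1 : lam * t = 63/20 * L := by
      have h : lam * t * d = 7/10 * t^2 := by rw [hlamdef]; field_simp
      rw [hkey] at h
      apply mul_right_cancel₀ hdne
      linarith
    have e2 : lam^2 * d = 441/200 * L := by
      have h : lam^2 * d^2 = 49/100 * t^2 := by rw [hlamdef]; field_simp; ring
      rw [hkey] at h
      apply mul_right_cancel₀ hdne
      nlinarith
    have hlam1 : lam ≤ 1 := by nlinarith [sq_nonneg (lam - 1), sq_nonneg lam]
    set p : ℝ := (d:ℝ)/n with hp
    set q : ℝ := ((n:ℝ)-(d:ℝ))/n with hq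
    have hp0 : 0 < p := by rw [hp]; positivity
    have hq0 : 0 < q := by rw [hq]; apply div_pos _ hn0; linarith
    have hpq : p + q = 1 := by rw [hp, hq]; field_simp; ring
    have hEg : (3/4) * p * lam^2 * ((n:ℝ)/2) - lam * t ≤ -(2*L) := by
      have h : (3/4) * p * lam^2 * ((n:ℝ)/2) = (3/8) * (lam^2 * d) := by
        rw [hp]; field_simp; ring
      rw [h, e2, e1]; linarith
    have hEs : (3/4) * p * lam^2 * (n:ℝ) - lam * t ≤ -(5/4*L) := by
      have h : (3/4) * p * lam^2 * (n:ℝ) = (3/4) * (lam^2 * d) := by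
        rw [hp]; field_simp
      rw [h, e2, e1]; linarith
    set ζ : ℂ := Complex.exp (2 * Real.pi * Complex.I / n) with hζdef
    have hζ : IsPrimitiveRoot ζ n := Complex.isPrimitiveRoot_exp n (NeZero.ne n)
    set μ : Finset (ZMod n) → ℝ :=
      fun T => p ^ T.card * q ^ (Fintype.card (ZMod n) - T.card) with hμ
    have hμ0 : ∀ T, 0 ≤ μ T := fun T => mul_nonneg (pow_nonneg hp0.le _) (pow_nonneg hq0.le _)
    have hcardZ : Fintype.card (ZMod n) = n := ZMod.card n
    have homega : ∀ i ∈ Finset.Icc 1 (n-1),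
        (ζ^i)^n = 1 ∧ ζ^i ≠ 1 ∧ ‖ζ^i‖ = 1 := by
      intro i hi
      rw [Finset.mem_Icc] at hi
      have h1 : (ζ^i)^n = 1 := by
        rw [← pow_mul, mul_comm, pow_mul, hζ.pow_eq_one, one_pow]
      refine ⟨h1, hζ.pow_ne_one_of_pos_of_lt (by omega) (by omega), ?_⟩
      exact Complex.norm_eq_one_of_pow_eq_one h1 (by omega)
    have event_bound : ∀ (c : ZMod n → ℝ) (V : ℝ), (∀ s, |c s| ≤ 1) →
        ((∑ s, c s) = 0) → ((∑ s, (c s)^2) ≤ V) →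
        ∑ T ∈ Finset.univ.powerset.filter (fun T => t ≤ ∑ s ∈ T, c s), μ T
          ≤ Real.exp ((3/4)*p*lam^2*V - lam*t) := by
      intro c V hc hs hV
      refine le_trans (chernoff_aux p q lam t hp0.le hq0.le hpq hlam0 c ?_ hs)
        (Real.exp_le_exp.mpr ?_)
      · intro s
        rw [abs_mul, abs_of_nonneg hlam0]
        calc lam * |c s| ≤ lam * 1 := mul_le_mul_of_nonneg_left (hc s) hlam0
          _ ≤ 1 := by linarith
      · have hcoef : 0 ≤ (3/4)*p*lam^2 := by positivity
        nlinarith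
    obtain ⟨T, hTcard, hTgood⟩ : ∃ T : Finset (ZMod n), T.card = d ∧
        ∀ i ∈ Finset.Icc 1 (n-1),
          |(∑ s ∈ T, (ζ^i)^(s.val)).re| ≤ t ∧ |(∑ s ∈ T, (ζ^i)^(s.val)).im| ≤ t := by
      by_contra hcon
      set Icc1 := Finset.Icc 1 (n-1) with hIcc
      set A : Finset (Finset (ZMod n)) :=
        Finset.univ.powerset.filter (fun T => T.card = d) with hA
      set Bi : ℕ → Finset (Finset (ZMod n)) := fun i => Finset.univ.powerset.filter
        (fun T => t < |(∑ s ∈ T, (ζ^i)^(s.val)).re| ∨ t < |(∑ s ∈ T, (ζ^i)^(s.val)).im|) with hBi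
      have hcover : A ⊆ Icc1.biUnion Bi := by
        intro T hT
        rw [hA, Finset.mem_filter] at hT
        have hbad : ∃ i ∈ Icc1, t < |(∑ s ∈ T, (ζ^i)^(s.val)).re| ∨
            t < |(∑ s ∈ T, (ζ^i)^(s.val)).im| := by
          by_contra h2
          push_neg at h2
          exact hcon ⟨T, hT.2, fun i hi => ⟨(h2 i hi).1, (h2 i hi).2⟩⟩
        obtain ⟨i, hi, hviol⟩ := hbad
        exact Finset.mem_biUnion.mpr ⟨i, hi, by
          rw [hBi]; exact Finset.mem_filter.mpr ⟨hT.1, hviol⟩⟩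
      have hAval : ∑ T ∈ A, μ T = (n.choose d : ℝ) * p^d * q^(n-d) := by
        have hconst : ∀ T ∈ A, μ T = p^d * q^(n-d) := by
          intro T hT
          rw [hA, Finset.mem_filter] at hT
          rw [hμ]
          simp only
          rw [hT.2, hcardZ]
        rw [Finset.sum_congr rfl hconst, Finset.sum_const]
        have hAcard : A.card = n.choose d := by
          rw [hA, ← Finset.powersetCard_eq_filter, Finset.card_powersetCard,
            Finset.card_univ, hcardZ]
        rw [hAcard, nsmul_eq_mul]
        ring
      have hlower : 1/((n:ℝ)+1) ≤ ∑ T ∈ A, μ T := by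
        rw [hAval, hp, hq]
        exact mode_aux n d (by omega) hdn
      have per_i : ∀ i ∈ Icc1, ∑ T ∈ Bi i, μ T
          ≤ 4 * (if 2*i = n then Real.exp (-(5/4*L)) else Real.exp (-(2*L))) := by
        intro i hi
        obtain ⟨hpow, hne1, habsω⟩ := homega i hi
        rw [hIcc, Finset.mem_Icc] at hi
        have habs1 : ∀ s : ZMod n, ‖(ζ^i) ^ s.val‖ = 1 := fun s => by
          rw [norm_pow, habsω, one_pow]
        have hb1 : ∀ s : ZMod n, |((ζ^i) ^ s.val).re| ≤ 1 := fun s =>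
          (Complex.abs_re_le_norm _).trans_eq (habs1 s)
        have hb3 : ∀ s : ZMod n, |((ζ^i) ^ s.val).im| ≤ 1 := fun s =>
          (Complex.abs_im_le_norm _).trans_eq (habs1 s)
        have hs0 : (∑ s : ZMod n, (ζ^i) ^ (s.val)) = 0 := full_sum_zero hpow hne1
        have hs1 : ∑ s : ZMod n, ((ζ^i) ^ s.val).re = 0 := by
          rw [← Complex.re_sum, hs0, Complex.zero_re]
        have hs3 : ∑ s : ZMod n, ((ζ^i) ^ s.val).im = 0 := by
          rw [← Complex.im_sum, hs0, Complex.zero_im]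
        set V : ℝ := if 2*i = n then (n:ℝ) else (n:ℝ)/2 with hV
        have hVre : ∑ s : ZMod n, (((ζ^i) ^ s.val).re)^2 ≤ V := by
          by_cases hsp : 2*i = n
          · rw [hV, if_pos hsp]
            calc ∑ s : ZMod n, (((ζ^i) ^ s.val).re)^2 ≤ ∑ _s : ZMod n, (1:ℝ) :=
                Finset.sum_le_sum (fun s _ => by
                  have := hb1 s
                  nlinarith [abs_nonneg (((ζ^i) ^ s.val).re), sq_abs (((ζ^i) ^ s.val).re)])
              _ = n := by rw [Finset.sum_const, Finset.card_univ, hcardZ, nsmul_eq_mul, mul_one]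
          · rw [hV, if_neg hsp]
            have hω2 : (ζ^i)^2 ≠ 1 := by
              intro h
              rw [← pow_mul] at h
              have hdvd := (hζ.pow_eq_one_iff_dvd (i*2)).mp h
              have heq : i*2 = n := Nat.eq_of_dvd_of_lt_two_mul (by omega) hdvd (by omega)
              omega
            exact (var_half hpow habsω hω2).1.le
        have hVim : ∑ s : ZMod n, (((ζ^i) ^ s.val).im)^2 ≤ V := by
          by_cases hsp : 2*i = n
          · rw [hV, if_pos hsp]
            calc ∑ s : ZMod n, (((ζ^i) ^ s.val).im)^2 ≤ ∑ _s : ZMod n, (1:ℝ) :=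
                Finset.sum_le_sum (fun s _ => by
                  have := hb3 s
                  nlinarith [abs_nonneg (((ζ^i) ^ s.val).im), sq_abs (((ζ^i) ^ s.val).im)])
              _ = n := by rw [Finset.sum_const, Finset.card_univ, hcardZ, nsmul_eq_mul, mul_one]
          · rw [hV, if_neg hsp]
            have hω2 : (ζ^i)^2 ≠ 1 := by
              intro h
              rw [← pow_mul] at h
              have hdvd := (hζ.pow_eq_one_iff_dvd (i*2)).mp h
              have heq : i*2 = n := Nat.eq_of_dvd_of_lt_two_mul (by omega) hdvd (by omega)
              omega
            exact (var_half hpow habsω hω2).2.le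
        have hexpV : Real.exp ((3/4)*p*lam^2*V - lam*t)
            ≤ (if 2*i = n then Real.exp (-(5/4*L)) else Real.exp (-(2*L))) := by
          by_cases hsp : 2*i = n
          · rw [hV, if_pos hsp, if_pos hsp]
            exact Real.exp_le_exp.mpr hEs
          · rw [hV, if_neg hsp, if_neg hsp]
            exact Real.exp_le_exp.mpr hEg
        -- the four one-sided events
        set C1 := Finset.univ.powerset.filter
          (fun T : Finset (ZMod n) => t ≤ ∑ s ∈ T, ((ζ^i) ^ s.val).re) with hC1
        set C2 := Finset.univ.powerset.filter
          (fun T : Finset (ZMod n) => t ≤ ∑ s ∈ T, (-((ζ^i) ^ s.val).re)) with hC2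
        set C3 := Finset.univ.powerset.filter
          (fun T : Finset (ZMod n) => t ≤ ∑ s ∈ T, ((ζ^i) ^ s.val).im) with hC3
        set C4 := Finset.univ.powerset.filter
          (fun T : Finset (ZMod n) => t ≤ ∑ s ∈ T, (-((ζ^i) ^ s.val).im)) with hC4
        have hsub : Bi i ⊆ (C1 ∪ C2) ∪ (C3 ∪ C4) := by
          intro T hT
          rw [hBi, Finset.mem_filter] at hT
          obtain ⟨hTpow, hTv⟩ := hT
          have hre : (∑ s ∈ T, (ζ^i)^(s.val)).re = ∑ s ∈ T, ((ζ^i) ^ s.val).re :=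
            Complex.re_sum _ _
          have him : (∑ s ∈ T, (ζ^i)^(s.val)).im = ∑ s ∈ T, ((ζ^i) ^ s.val).im :=
            Complex.im_sum _ _
          rcases hTv with hv | hv
          · rcases lt_abs.mp hv with hv2 | hv2
            · exact Finset.mem_union_left _ (Finset.mem_union_left _
                (Finset.mem_filter.mpr ⟨hTpow, by rw [← hre]; exact hv2.le⟩))
            · refine Finset.mem_union_left _ (Finset.mem_union_right _
                (Finset.mem_filter.mpr ⟨hTpow, ?_⟩))
              rw [Finset.sum_neg_distrib, ← hre]
              exact hv2.le
          · rcases lt_abs.mp hv with hv2 | hv2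
            · exact Finset.mem_union_right _ (Finset.mem_union_left _
                (Finset.mem_filter.mpr ⟨hTpow, by rw [← him]; exact hv2.le⟩))
            · refine Finset.mem_union_right _ (Finset.mem_union_right _
                (Finset.mem_filter.mpr ⟨hTpow, ?_⟩))
              rw [Finset.sum_neg_distrib, ← him]
              exact hv2.le
        have hb1' : ∑ T ∈ C1, μ T ≤ Real.exp ((3/4)*p*lam^2*V - lam*t) :=
          event_bound _ V hb1 hs1 hVre
        have hb2' : ∑ T ∈ C2, μ T ≤ Real.exp ((3/4)*p*lam^2*V - lam*t) := by
          refine event_bound _ V (fun s => by rw [abs_neg]; exact hb1 s) ?_ ?_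
          · rw [Finset.sum_neg_distrib, hs1, neg_zero]
          · calc ∑ s : ZMod n, (-((ζ^i) ^ s.val).re)^2
                = ∑ s : ZMod n, (((ζ^i) ^ s.val).re)^2 := by
                  exact Finset.sum_congr rfl (fun s _ => by ring)
              _ ≤ V := hVre
        have hb3' : ∑ T ∈ C3, μ T ≤ Real.exp ((3/4)*p*lam^2*V - lam*t) :=
          event_bound _ V hb3 hs3 hVim
        have hb4' : ∑ T ∈ C4, μ T ≤ Real.exp ((3/4)*p*lam^2*V - lam*t) := by
          refine event_bound _ V (fun s => by rw [abs_neg]; exact hb3 s) ?_ ?_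
          · rw [Finset.sum_neg_distrib, hs3, neg_zero]
          · calc ∑ s : ZMod n, (-((ζ^i) ^ s.val).im)^2
                = ∑ s : ZMod n, (((ζ^i) ^ s.val).im)^2 := by
                  exact Finset.sum_congr rfl (fun s _ => by ring)
              _ ≤ V := hVim
        calc ∑ T ∈ Bi i, μ T
            ≤ ∑ T ∈ (C1 ∪ C2) ∪ (C3 ∪ C4), μ T :=
              Finset.sum_le_sum_of_subset_of_nonneg hsub (fun T _ _ => hμ0 T)
          _ ≤ (∑ T ∈ C1 ∪ C2, μ T) + (∑ T ∈ C3 ∪ C4, μ T) := sum_union_le' _ _ _ hμ0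
          _ ≤ ((∑ T ∈ C1, μ T) + (∑ T ∈ C2, μ T)) + ((∑ T ∈ C3, μ T) + (∑ T ∈ C4, μ T)) :=
              add_le_add (sum_union_le' _ _ _ hμ0) (sum_union_le' _ _ _ hμ0)
          _ ≤ 4 * Real.exp ((3/4)*p*lam^2*V - lam*t) := by linarith
          _ ≤ 4 * (if 2*i = n then Real.exp (-(5/4*L)) else Real.exp (-(2*L))) := by
              linarith [hexpV]
      -- combine the union bound
      have hupper : ∑ T ∈ A, μ T
          ≤ 4*(n:ℝ)*Real.exp (-(2*L)) + 4*Real.exp (-(5/4*L)) := by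
        have h1 : ∑ T ∈ A, μ T ≤ ∑ T ∈ Icc1.biUnion Bi, μ T :=
          Finset.sum_le_sum_of_subset_of_nonneg hcover (fun T _ _ => hμ0 T)
        have h2 : ∑ T ∈ Icc1.biUnion Bi, μ T ≤ ∑ i ∈ Icc1, ∑ T ∈ Bi i, μ T :=
          sum_biUnion_le' _ _ _ hμ0
        have h3 : ∑ i ∈ Icc1, ∑ T ∈ Bi i, μ T
            ≤ ∑ i ∈ Icc1, (4 * Real.exp (-(2*L)) +
              (if 2*i = n then 4*Real.exp (-(5/4*L)) else 0)) := by
          refine Finset.sum_le_sum (fun i hi => le_trans (per_i i hi) ?_)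
          by_cases hsp : 2*i = n
          · rw [if_pos hsp, if_pos hsp]
            have := Real.exp_pos (-(2*L))
            linarith
          · rw [if_neg hsp, if_neg hsp]
            have := Real.exp_pos (-(5/4*L))
            linarith
        have h4 : ∑ i ∈ Icc1, (4 * Real.exp (-(2*L)) +
              (if 2*i = n then 4*Real.exp (-(5/4*L)) else 0))
            ≤ 4*(n:ℝ)*Real.exp (-(2*L)) + 4*Real.exp (-(5/4*L)) := by
          rw [Finset.sum_add_distrib, Finset.sum_const]
          have hcard1 : Icc1.card ≤ n := by
            rw [hIcc, Nat.card_Icc]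
            omega
          have hconst : (Icc1.card : ℝ) * (4 * Real.exp (-(2*L)))
              ≤ 4*(n:ℝ)*Real.exp (-(2*L)) := by
            have : (Icc1.card : ℝ) ≤ n := by exact_mod_cast hcard1
            nlinarith [Real.exp_pos (-(2*L))]
          have hite : ∑ i ∈ Icc1, (if 2*i = n then 4*Real.exp (-(5/4*L)) else 0)
              ≤ 4*Real.exp (-(5/4*L)) := by
            have hfc : (Icc1.filter (fun i => 2*i = n)).card ≤ 1 :=
              Finset.card_le_one.mpr (by
                intro a ha b hb
                rw [Finset.mem_filter] at ha hb
                omega)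
            calc ∑ i ∈ Icc1, (if 2*i = n then 4*Real.exp (-(5/4*L)) else 0)
                = ∑ _i ∈ Icc1.filter (fun i => 2*i = n), 4*Real.exp (-(5/4*L)) := by
                  rw [Finset.sum_filter]
              _ = ((Icc1.filter (fun i => 2*i = n)).card : ℝ) * (4*Real.exp (-(5/4*L))) := by
                  rw [Finset.sum_const, nsmul_eq_mul]
              _ ≤ 4*Real.exp (-(5/4*L)) := by
                  have h1 : ((Icc1.filter (fun i => 2*i = n)).card : ℝ) ≤ 1 := by
                    exact_mod_cast hfc
                  exact mul_le_of_le_one_left (by positivity) h1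
          rw [nsmul_eq_mul]
          linarith
        linarith
      -- numeric contradiction
      have hexpL : Real.exp L = 10*n := by rw [hL]; exact Real.exp_log (by positivity)
      have hEg2 : Real.exp (-(2*L)) = ((10*(n:ℝ))⁻¹) * ((10*(n:ℝ))⁻¹) := by
        rw [show -(2*L) = -L + -L by ring, Real.exp_add, Real.exp_neg, hexpL]
      have hEs2 : Real.exp (-(5/4*L)) ≤ (20*(n:ℝ))⁻¹ := by
        have h20 : (20:ℝ)*n ≤ Real.exp (5/4*L) := by
          have h4 : (2:ℝ) ≤ Real.exp (L/4) := by
            have hlog2 : Real.log 2 ≤ L/4 := by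
              have h16' : Real.log 16 = 4 * Real.log 2 := by
                rw [show (16:ℝ) = 2^4 by norm_num, Real.log_pow]
                push_cast
                ring
              linarith
            calc (2:ℝ) = Real.exp (Real.log 2) := (Real.exp_log (by norm_num)).symm
              _ ≤ Real.exp (L/4) := Real.exp_le_exp.mpr hlog2
          calc (20:ℝ)*n = 2*(10*n) := by ring
            _ ≤ Real.exp (L/4) * Real.exp L := by
                rw [hexpL]
                nlinarith [hn0]
            _ = Real.exp (5/4*L) := by rw [← Real.exp_add]; ring_nf
        rw [Real.exp_neg]
        exact inv_anti₀ (by positivity) h20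
      have hfin : 4*(n:ℝ)*Real.exp (-(2*L)) + 4*Real.exp (-(5/4*L)) < 1/((n:ℝ)+1) := by
        have hn2 : (2:ℝ) ≤ n := by exact_mod_cast hn
        have hb : 4*(n:ℝ)*((10*(n:ℝ))⁻¹*(10*(n:ℝ))⁻¹) = (25*(n:ℝ))⁻¹ := by
          field_simp
          ring
        have he : (25*(n:ℝ))⁻¹ + 4*(20*(n:ℝ))⁻¹ = 6/(25*(n:ℝ)) := by
          field_simp
          ring
        have hlt : 6/(25*(n:ℝ)) < 1/((n:ℝ)+1) := by
          rw [div_lt_div_iff₀ (by positivity) (by positivity)]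
          linarith
        calc 4*(n:ℝ)*Real.exp (-(2*L)) + 4*Real.exp (-(5/4*L))
            ≤ (25*(n:ℝ))⁻¹ + 4*(20*(n:ℝ))⁻¹ := by
              rw [hEg2] at *
              linarith [hEs2]
          _ = 6/(25*(n:ℝ)) := he
          _ < 1/((n:ℝ)+1) := hlt
      linarith
    -- conclusion from the good set
    refine ⟨T, hTcard, ?_⟩
    intro ω hω hω1
    obtain ⟨i, hilt, hieq⟩ := hζ.eq_pow_of_pow_eq_one hω
    have hi0 : i ≠ 0 := by
      intro h
      rw [h, pow_zero] at hieq
      exact hω1 hieq.symm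
    have hiIcc : i ∈ Finset.Icc 1 (n-1) := Finset.mem_Icc.mpr ⟨by omega, by omega⟩
    obtain ⟨hre, him⟩ := hTgood i hiIcc
    rw [hieq] at hre him
    have hre2 : ((∑ s ∈ T, ω^(s.val)).re)^2 ≤ t^2 := by
      nlinarith [abs_nonneg ((∑ s ∈ T, ω^(s.val)).re), sq_abs ((∑ s ∈ T, ω^(s.val)).re)]
    have him2 : ((∑ s ∈ T, ω^(s.val)).im)^2 ≤ t^2 := by
      nlinarith [abs_nonneg ((∑ s ∈ T, ω^(s.val)).im), sq_abs ((∑ s ∈ T, ω^(s.val)).im)]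
    have habs : ‖∑ s ∈ T, ω^(s.val)‖ ≤ Real.sqrt (2*t^2) := by
      rw [Complex.norm_def, Complex.normSq_apply]
      apply Real.sqrt_le_sqrt
      nlinarith
    have hsqrt2t : Real.sqrt (2*t^2) = 3 * Real.sqrt d * Real.sqrt L := by
      rw [Real.sqrt_mul (by norm_num : (0:ℝ) ≤ 2), Real.sqrt_sq ht0, ht]
      have h2 : Real.sqrt 2 ≠ 0 := by positivity
      field_simp
    calc ‖∑ s ∈ T, ω^(s.val)‖ ≤ Real.sqrt (2*t^2) := habs
      _ = 3 * Real.sqrt d * Real.sqrt L := hsqrt2t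
end
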